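/- arXiv:2407.10364 — 8 statements merged into one kernel-verified Lean document; each statement's English description precedes it below -/
import Mathlib

section
/- Let R = R₁ × R₂ × ⋯ × Rₘ be a finite commutative ring with unity having an odd number of elements, where each Rᵢ is a finite commutative local ring with unique maximal ideal Mᵢ. Then the clique number and the chromatic number of the unitary addition Cayley graph U(R) are both equal to m + ∏_{i=1}^{m} (|Rᵢ| − |Mᵢ|)/2. -/
/-- The unitary addition Cayley graph of a ring `R`: vertices are elements of `R`,
and distinct `x`, `y` are adjacent iff `x + y` is a unit. -/
def unitaryCayley (R : Type*) [CommRing R] : SimpleGraph R where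
  Adj x y := x ≠ y ∧ IsUnit (x + y)
  symm := ⟨fun x y ⟨h1, h2⟩ => ⟨h1.symm, by rwa [add_comm]⟩⟩
  loopless := ⟨fun x ⟨h, _⟩ => h rfl⟩

/-- A proper coloring is complete if it is surjective and between every pair of
distinct color classes there is at least one edge. -/
def IsCompleteColoring {V β : Type*} (G : SimpleGraph V) (C : G.Coloring β) : Prop :=
  Function.Surjective C ∧
    ∀ c₁ c₂ : β, c₁ ≠ c₂ → ∃ x y, G.Adj x y ∧ C x = c₁ ∧ C y = c₂

/-- The achromatic number: the maximum number of colors in a complete proper coloring. -/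
noncomputable def achromaticNumber {V : Type*} (G : SimpleGraph V) : ℕ :=
  sSup {n | ∃ C : G.Coloring (Fin n), IsCompleteColoring G C}



lemma pi_isUnit_iff {ι : Type*} {R : ι → Type*} [∀ i, CommRing (R i)] (f : ∀ i, R i) :
    IsUnit f ↔ ∀ i, IsUnit (f i) := by
  constructor
  · intro h i
    exact h.map (Pi.evalRingHom R i)
  · intro h
    choose u hu using fun i => h i
    refine IsUnit.of_mul_eq_one (a := f) (fun i => ((u i)⁻¹ : (R i)ˣ)) ?_
    funext i
    simp [← hu i]

lemma no_two_torsion {S : Type*} [CommRing S] [Fintype S]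
    (hodd : Odd (Fintype.card S)) (x : S) (hx : x + x = 0) : x = 0 := by
  have h1 : addOrderOf x ∣ 2 := by
    rw [addOrderOf_dvd_iff_nsmul_eq_zero, two_nsmul, hx]
  have h2 : addOrderOf x ∣ Fintype.card S := addOrderOf_dvd_card
  have h3 : addOrderOf x ∣ Nat.gcd 2 (Fintype.card S) := Nat.dvd_gcd h1 h2
  have h4 : Nat.gcd 2 (Fintype.card S) = 1 := Nat.coprime_two_left.mpr hodd
  rw [h4, Nat.dvd_one] at h3
  exact AddMonoid.addOrderOf_eq_one_iff.mp h3


lemma half_set {K : Type*} [AddCommGroup K] [DecidableEq K]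
    (h2 : ∀ x : K, x + x = 0 → x = 0) (A : Finset K) :
    (0 : K) ∉ A → (∀ a ∈ A, -a ∈ A) →
    ∃ T, T ⊆ A ∧ (∀ t ∈ T, ∀ s ∈ T, t + s ≠ 0) ∧ ∀ a ∈ A, a ∈ T ∨ -a ∈ T := by
  induction A using Finset.strongInduction with
  | _ A ih =>
    intro h0 hneg
    rcases A.eq_empty_or_nonempty with rfl | ⟨a, ha⟩
    · exact ⟨∅, by simp⟩
    · have ha0 : a ≠ 0 := fun h => h0 (h ▸ ha)
      set A' := (A.erase a).erase (-a) with hA'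
      have hss : A' ⊂ A := by
        refine Finset.ssubset_iff_of_subset ?_ |>.mpr ⟨a, ha, ?_⟩
        · intro x hx
          exact Finset.mem_of_mem_erase (Finset.mem_of_mem_erase hx)
        · intro hx
          exact (Finset.ne_of_mem_erase (Finset.mem_of_mem_erase hx)) rfl
      have h0' : (0 : K) ∉ A' := fun h =>
        h0 (Finset.mem_of_mem_erase (Finset.mem_of_mem_erase h))
      have hneg' : ∀ b ∈ A', -b ∈ A' := by
        intro b hb
        have hbA : b ∈ A := Finset.mem_of_mem_erase (Finset.mem_of_mem_erase hb)
        have hbna : b ≠ -a := Finset.ne_of_mem_erase hb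
        have hba : b ≠ a := Finset.ne_of_mem_erase (Finset.mem_of_mem_erase hb)
        refine Finset.mem_erase.mpr ⟨?_, Finset.mem_erase.mpr ⟨?_, hneg b hbA⟩⟩
        · intro h; exact hba (by rw [← neg_neg b, h, neg_neg])
        · intro h; exact hbna (by rw [← neg_neg b, h])
      obtain ⟨T, hTsub, hTadd, hTcov⟩ := ih A' hss h0' hneg'
      refine ⟨insert a T, ?_, ?_, ?_⟩
      · intro x hx
        rcases Finset.mem_insert.mp hx with rfl | hx
        · exact ha
        · exact Finset.mem_of_mem_erase (Finset.mem_of_mem_erase (hTsub hx))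
      · intro t ht s hs
        rcases Finset.mem_insert.mp ht with ht1 | ht2
        · rcases Finset.mem_insert.mp hs with hs1 | hs2
          · subst ht1; subst hs1
            exact fun h => ha0 (h2 _ h)
          · subst ht1
            intro h
            exact (Finset.ne_of_mem_erase (hTsub hs2)) (eq_neg_of_add_eq_zero_right h)
        · rcases Finset.mem_insert.mp hs with hs1 | hs2
          · subst hs1
            intro h
            exact (Finset.ne_of_mem_erase (hTsub ht2)) (eq_neg_of_add_eq_zero_left h)
          · exact hTadd t ht2 s hs2
      · intro b hb
        by_cases hb1 : b = a
        · exact Or.inl (hb1 ▸ Finset.mem_insert_self a T)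
        by_cases hb2 : b = -a
        · right; rw [hb2, neg_neg]; exact Finset.mem_insert_self a T
        · have : b ∈ A' := Finset.mem_erase.mpr ⟨hb2, Finset.mem_erase.mpr ⟨hb1, hb⟩⟩
          rcases hTcov b this with h | h
          · exact Or.inl (Finset.mem_insert_of_mem h)
          · exact Or.inr (Finset.mem_insert_of_mem h)



lemma key_lemma (S : Type*) [CommRing S] [IsLocalRing S] [Fintype S]
    (hodd : Odd (Fintype.card S)) :
    ∃ H : Finset S, (∀ a ∈ H, ∀ b ∈ H, IsUnit (a + b)) ∧
      (∀ x : S, IsUnit x → x ∈ H ∨ -x ∈ H) ∧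
      2 * H.card = Fintype.card S - Nat.card (IsLocalRing.maximalIdeal S) := by
  classical
  set k := IsLocalRing.ResidueField S with hk
  set π := IsLocalRing.residue S with hπ
  haveI : Finite k := Finite.of_surjective π Ideal.Quotient.mk_surjective
  haveI : Fintype k := Fintype.ofFinite k
  -- 2 is a unit in S
  have hu2 : IsUnit (2 : S) := by
    have hinj : Function.Injective (fun x : S => x + x) := by
      intro x y hxy
      simp only at hxy
      have h0 : (x - y) + (x - y) = 0 := by linear_combination hxy
      exact sub_eq_zero.mp (no_two_torsion hodd _ h0)
    have hsurj := Finite.surjective_of_injective hinj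
    obtain ⟨y, hy⟩ := hsurj 1
    exact IsUnit.of_mul_eq_one (a := (2 : S)) y (by rw [two_mul]; linear_combination hy)
  have h2k : ∀ y : k, y + y = 0 → y = 0 := by
    intro y hy
    have h2k' : IsUnit (2 : k) := by
      have := hu2.map π
      rwa [map_ofNat] at this
    have : (2 : k) * y = 0 := by rw [two_mul]; exact hy
    rcases mul_eq_zero.mp this with h | h
    · exact absurd h h2k'.ne_zero
    · exact h
  obtain ⟨T, hTsub, hTadd, hTcov⟩ := half_set h2k ((Finset.univ : Finset k).erase 0)
    (by simp) (by intro a ha; simp only [Finset.mem_erase] at *; exact ⟨neg_ne_zero.mpr ha.1, Finset.mem_univ _⟩)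
  have hT0 : ∀ t ∈ T, t ≠ 0 := by
    intro t ht h
    exact hTadd t ht t ht (by rw [h, add_zero])
  refine ⟨Finset.univ.filter (fun x : S => π x ∈ T), ?_, ?_, ?_⟩
  · intro a ha b hb
    simp only [Finset.mem_filter] at ha hb
    rw [← IsLocalRing.residue_ne_zero_iff_isUnit]
    show π (a + b) ≠ 0
    rw [map_add]
    exact hTadd _ ha.2 _ hb.2
  · intro x hx
    have hx0 : π x ≠ 0 := (IsLocalRing.residue_ne_zero_iff_isUnit x).mpr hx
    rcases hTcov (π x) (by simp [hx0]) with h | h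
    · exact Or.inl (by simp [h])
    · refine Or.inr ?_
      simp only [Finset.mem_filter, Finset.mem_univ, true_and, map_neg]
      exact h
  · set H := Finset.univ.filter (fun x : S => π x ∈ T) with hH
    set U := Finset.univ.filter (fun x : S => IsUnit x) with hU
    have hHU : H ⊆ U := by
      intro x hx
      simp only [hH, hU, Finset.mem_filter, Finset.mem_univ, true_and] at *
      rw [← IsLocalRing.residue_ne_zero_iff_isUnit]
      exact hT0 _ hx
    have hdisj : Disjoint H (H.image (fun a => -a)) := by
      rw [Finset.disjoint_left]
      intro x hx hx'
      obtain ⟨a, ha, rfl⟩ := Finset.mem_image.mp hx'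
      simp only [hH, Finset.mem_filter, Finset.mem_univ, true_and] at hx ha
      exact hTadd _ hx _ ha (by rw [map_neg]; ring)
    have hunion : H ∪ H.image (fun a => -a) = U := by
      apply Finset.Subset.antisymm
      · apply Finset.union_subset hHU
        intro x hx
        obtain ⟨a, ha, rfl⟩ := Finset.mem_image.mp hx
        have haU : IsUnit a := by simpa [hU] using hHU ha
        simp only [hU, Finset.mem_filter, Finset.mem_univ, true_and]
        exact haU.neg
      · intro x hx
        have hx' : IsUnit x := by simpa [hU] using hx
        have hx0 : π x ≠ 0 := (IsLocalRing.residue_ne_zero_iff_isUnit x).mpr hx'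
        rcases hTcov (π x) (by simp [hx0]) with h | h
        · exact Finset.mem_union_left _ (by simp [hH, h])
        · refine Finset.mem_union_right _ ?_
          refine Finset.mem_image.mpr ⟨-x, ?_, by ring⟩
          simp only [hH, Finset.mem_filter, Finset.mem_univ, true_and, map_neg]
          exact h
    have hcardU : 2 * H.card = U.card := by
      rw [← hunion, Finset.card_union_of_disjoint hdisj,
        Finset.card_image_of_injective _ neg_injective, two_mul]
    have hM : (Finset.univ.filter (fun x : S => ¬ IsUnit x)) = (IsLocalRing.maximalIdeal S : Set S).toFinset := by
      ext x
      simp [IsLocalRing.mem_maximalIdeal, mem_nonunits_iff]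
    have hMcard : Nat.card (IsLocalRing.maximalIdeal S) = (IsLocalRing.maximalIdeal S : Set S).toFinset.card := by
      rw [← SetLike.coe_sort_coe, Nat.card_coe_set_eq, Set.ncard_eq_toFinset_card']
    have htot := Finset.card_filter_add_card_filter_not (s := (Finset.univ : Finset S))
      (p := fun x : S => IsUnit x)
    rw [hcardU, hMcard]
    simp only [hU] at htot ⊢
    rw [hM] at htot
    simp only [Finset.card_univ] at htot
    omega

theorem stmt_0 (m : ℕ) (R : Fin m → Type*) [∀ i, CommRing (R i)]
    [∀ i, IsLocalRing (R i)] [∀ i, Fintype (R i)]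
    (hodd : Odd (Fintype.card (∀ i, R i))) :
    (unitaryCayley (∀ i, R i)).cliqueNum =
        m + ∏ i, (Fintype.card (R i) - Nat.card (IsLocalRing.maximalIdeal (R i))) / 2 ∧
    (unitaryCayley (∀ i, R i)).chromaticNumber =
        ((m + ∏ i, (Fintype.card (R i) - Nat.card (IsLocalRing.maximalIdeal (R i))) / 2 : ℕ) : ℕ∞) := by
  classical
  set N := m + ∏ i, (Fintype.card (R i) - Nat.card (IsLocalRing.maximalIdeal (R i))) / 2 with hN
  have hoddi : ∀ i, Odd (Fintype.card (R i)) := by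
    intro i
    rcases Nat.even_or_odd (Fintype.card (R i)) with he | ho
    · exfalso
      have h2 : 2 ∣ Fintype.card (∀ i, R i) := by
        rw [Fintype.card_pi]
        exact dvd_trans he.two_dvd (Finset.dvd_prod_of_mem _ (Finset.mem_univ i))
      rw [← Nat.not_even_iff_odd] at hodd
      exact hodd (even_iff_two_dvd.mpr h2)
    · exact ho
  choose H hH1 hH2 hH3 using fun i => key_lemma (R i) (hoddi i)
  have hHunit : ∀ i, ∀ a ∈ H i, IsUnit a := by
    intro i a ha
    have h := hH1 i a ha a ha
    rw [← mul_two] at h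
    exact isUnit_of_mul_isUnit_left h
  have hHne : ∀ i, ∃ a, a ∈ H i := by
    intro i
    rcases hH2 i 1 isUnit_one with h | h
    · exact ⟨1, h⟩
    · exact ⟨-1, h⟩
  choose h0 hh0 using hHne
  have hh0unit : ∀ i, IsUnit (h0 i) := fun i => hHunit i _ (hh0 i)
  have hh0ne : ∀ i, h0 i ≠ 0 := fun i h => not_isUnit_zero (h ▸ hh0unit i)
  have hcard : ∀ i, (H i).card =
      (Fintype.card (R i) - Nat.card (IsLocalRing.maximalIdeal (R i))) / 2 := by
    intro i
    have := hH3 i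
    omega
  -- the clique
  set e : Fin m → (∀ i, R i) := fun j => Function.update h0 j 0 with he
  have heje : ∀ j, e j j = 0 := by intro j; simp [he]
  have hejn : ∀ j i, i ≠ j → e j i = h0 i := by
    intro j i h; simp [he, Function.update_of_ne h]
  set K := Fintype.piFinset H ∪ Finset.image e Finset.univ with hK
  have hKclique : (unitaryCayley (∀ i, R i)).IsClique (K : Set (∀ i, R i)) := by
    intro x hx y hy hxy
    refine (⟨hxy, ?_⟩ : x ≠ y ∧ IsUnit (x + y))
    rw [pi_isUnit_iff]
    intro i
    rw [Pi.add_apply]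
    simp only [hK, Finset.coe_union, Set.mem_union, Finset.mem_coe,
      Fintype.mem_piFinset, Finset.coe_image, Set.mem_image] at hx hy
    rcases hx with hx | ⟨j, _, rfl⟩ <;> rcases hy with hy | ⟨l, _, rfl⟩
    · exact hH1 i _ (hx i) _ (hy i)
    · by_cases h : i = l
      · subst h; rw [heje, add_zero]; exact hHunit i _ (hx i)
      · rw [hejn l i h]; exact hH1 i _ (hx i) _ (hh0 i)
    · by_cases h : i = j
      · subst h; rw [heje, zero_add]; exact hHunit i _ (hy i)
      · rw [hejn j i h]; exact hH1 i _ (hh0 i) _ (hy i)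
    · have hjl : j ≠ l := by rintro rfl; exact hxy rfl
      by_cases h1 : i = j
      · subst h1
        rw [heje, zero_add, hejn l i (by exact hjl)]
        exact hh0unit i
      · by_cases h2 : i = l
        · subst h2
          rw [heje, add_zero, hejn j i h1]
          exact hh0unit i
        · rw [hejn j i h1, hejn l i h2]
          exact hH1 i _ (hh0 i) _ (hh0 i)
  have hdisj : Disjoint (Fintype.piFinset H) (Finset.image e Finset.univ) := by
    rw [Finset.disjoint_left]
    intro z hz hz'
    obtain ⟨j, _, rfl⟩ := Finset.mem_image.mp hz'
    rw [Fintype.mem_piFinset] at hz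
    have := hHunit j _ (hz j)
    rw [heje] at this
    exact not_isUnit_zero this
  have heinj : Function.Injective e := by
    intro j l h
    by_contra hjl
    have h1 := congrFun h j
    rw [heje, hejn l j hjl] at h1
    exact hh0ne j h1.symm
  have hKcard : K.card = N := by
    rw [hK, Finset.card_union_of_disjoint hdisj, Fintype.card_piFinset,
      Finset.card_image_of_injective _ heinj, Finset.card_univ, Fintype.card_fin]
    rw [hN]
    rw [Finset.prod_congr rfl (fun i _ => hcard i)]
    ring
  have hKN : (unitaryCayley (∀ i, R i)).IsNClique N K := ⟨hKclique, hKcard⟩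
  -- the coloring
  set s : ∀ i, R i → R i := fun i a => if a ∈ H i then a else -a with hs
  have hsmem : ∀ i a, IsUnit a → s i a ∈ H i := by
    intro i a ha
    rw [hs]
    by_cases h : a ∈ H i
    · simpa [h]
    · rcases hH2 i a ha with h' | h'
      · exact absurd h' h
      · simpa [h]
  have hsval : ∀ i a, s i a = a ∨ s i a = -a := by
    intro i a
    rw [hs]
    by_cases h : a ∈ H i <;> simp [h]
  have hpick : ∀ x : ∀ i, R i, ¬(∀ i, IsUnit (x i)) →
      (Finset.univ.filter (fun i => ¬ IsUnit (x i))).Nonempty := by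
    intro x hx
    obtain ⟨j, hj⟩ := not_forall.mp hx
    exact ⟨j, Finset.mem_filter.mpr ⟨Finset.mem_univ _, hj⟩⟩
  set C : (∀ i, R i) → ((∀ i, {a // a ∈ H i}) ⊕ Fin m) := fun x =>
    if hx : ∀ i, IsUnit (x i) then Sum.inl (fun i => ⟨s i (x i), hsmem i _ (hx i)⟩)
    else Sum.inr ((Finset.univ.filter (fun i => ¬ IsUnit (x i))).min' (hpick x hx)) with hC
  have hvalid : ∀ {x y}, (unitaryCayley (∀ i, R i)).Adj x y → C x ≠ C y := by
    intro x y hadj hCeq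
    obtain ⟨hne, hunit⟩ : x ≠ y ∧ IsUnit (x + y) := hadj
    rw [pi_isUnit_iff] at hunit
    by_cases hx : ∀ i, IsUnit (x i) <;> by_cases hy : ∀ i, IsUnit (y i)
    · rw [hC] at hCeq
      simp only [dif_pos hx, dif_pos hy] at hCeq
      have hfg := Sum.inl.inj hCeq
      apply hne
      funext i
      have hi : s i (x i) = s i (y i) := by
        have := congrFun hfg i
        exact Subtype.ext_iff.mp this
      rcases hsval i (x i) with h1 | h1 <;> rcases hsval i (y i) with h2 | h2 <;>
        rw [h1, h2] at hi
      · exact hi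
      · exfalso
        have h0 : x i + y i = 0 := by linear_combination hi
        have hu := hunit i
        rw [Pi.add_apply, h0] at hu
        exact not_isUnit_zero hu
      · exfalso
        have h0 : x i + y i = 0 := by linear_combination -hi
        have hu := hunit i
        rw [Pi.add_apply, h0] at hu
        exact not_isUnit_zero hu
      · exact neg_injective hi
    · rw [hC] at hCeq
      simp only [dif_pos hx, dif_neg hy] at hCeq
      exact Sum.inl_ne_inr hCeq
    · rw [hC] at hCeq
      simp only [dif_neg hx, dif_pos hy] at hCeq
      exact Sum.inr_ne_inl hCeq
    · rw [hC] at hCeq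
      simp only [dif_neg hx, dif_neg hy] at hCeq
      have hj := Sum.inr.inj hCeq
      set j := (Finset.univ.filter (fun i => ¬ IsUnit (x i))).min' (hpick x hx) with hjdef
      have hxj : ¬ IsUnit (x j) := by
        have := Finset.min'_mem (Finset.univ.filter (fun i => ¬ IsUnit (x i))) (hpick x hx)
        exact (Finset.mem_filter.mp this).2
      have hyj : ¬ IsUnit (y j) := by
        have := Finset.min'_mem (Finset.univ.filter (fun i => ¬ IsUnit (y i))) (hpick y hy)
        rw [← hj] at this
        exact (Finset.mem_filter.mp this).2
      have hxm : x j ∈ IsLocalRing.maximalIdeal (R j) :=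
        (IsLocalRing.mem_maximalIdeal _).mpr hxj
      have hym : y j ∈ IsLocalRing.maximalIdeal (R j) :=
        (IsLocalRing.mem_maximalIdeal _).mpr hyj
      have hsum : x j + y j ∈ IsLocalRing.maximalIdeal (R j) := Ideal.add_mem _ hxm hym
      have hu := hunit j
      rw [Pi.add_apply] at hu
      exact ((IsLocalRing.mem_maximalIdeal _).mp hsum) hu
  have hcol : (unitaryCayley (∀ i, R i)).Colorable N := by
    have hcolor : (unitaryCayley (∀ i, R i)).Coloring ((∀ i, {a // a ∈ H i}) ⊕ Fin m) :=
      SimpleGraph.Coloring.mk C hvalid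
    have hcardβ : Fintype.card ((∀ i, {a // a ∈ H i}) ⊕ Fin m) = N := by
      rw [Fintype.card_sum, Fintype.card_pi, Fintype.card_fin, hN]
      rw [Finset.prod_congr rfl (fun i _ => (Fintype.card_coe (H i)).trans (hcard i))]
      ring
    have := hcolor.colorable
    rwa [hcardβ] at this
  constructor
  · apply le_antisymm
    · obtain ⟨t, ht⟩ := SimpleGraph.exists_isNClique_cliqueNum (G := unitaryCayley (∀ i, R i))
      have := ht.isClique.card_le_of_colorable hcol
      rwa [ht.card_eq] at this
    · have := SimpleGraph.IsClique.card_le_cliqueNum (tc := hKclique)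
      rwa [hKcard] at this
  · apply le_antisymm
    · exact_mod_cast hcol.chromaticNumber_le
    · have := hKclique.card_le_chromaticNumber
      rwa [hKcard] at this
end

section
/- If n is an odd positive integer with exactly m distinct prime factors, then the clique number and the chromatic number of the unitary addition Cayley graph U(ℤₙ) are both equal to m + φ(n)/2^m, where φ is Euler's totient function. -/
namespace UAC

open Finset

/-! ### Level of `ZMod p` for an odd prime `p` -/

/-- The "lower half" of `ZMod p`. -/
def lower (p : ℕ) [NeZero p] : Finset (ZMod p) :=
  Finset.univ.filter (fun t : ZMod p => 0 < t.val ∧ 2 * t.val < p)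

variable {p : ℕ} [NeZero p]

lemma mem_lower {t : ZMod p} : t ∈ lower p ↔ 0 < t.val ∧ 2 * t.val < p := by
  simp [lower]

lemma lower_ne_zero {t : ZMod p} (ht : t ∈ lower p) : t ≠ 0 := by
  rw [mem_lower] at ht
  intro h
  rw [← ZMod.val_eq_zero] at h
  omega

lemma lower_add_ne_zero {t s : ZMod p} (ht : t ∈ lower p) (hs : s ∈ lower p) :
    t + s ≠ 0 := by
  rw [mem_lower] at ht hs
  have hlt : t.val + s.val < p := by omega
  have h2 := ZMod.val_add_of_lt hlt
  intro h
  rw [← ZMod.val_eq_zero] at h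
  omega

lemma lower_neg (hodd : Odd p) {t : ZMod p} (ht : t ≠ 0) (htl : t ∉ lower p) :
    -t ∈ lower p := by
  have hvpos : 0 < t.val := by
    by_contra h
    exact ht ((ZMod.val_eq_zero t).mp (by omega))
  have hvlt : t.val < p := ZMod.val_lt t
  have hneg : (-t).val = p - t.val := by
    rw [ZMod.neg_val, if_neg ht]
  rw [mem_lower] at htl ⊢
  obtain ⟨k, hk⟩ := hodd
  omega

lemma lower_neg_not_mem (hodd : Odd p) {t : ZMod p} (htl : t ∈ lower p) :
    -t ∉ lower p := by
  intro h
  have ht0 : t ≠ 0 := lower_ne_zero htl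
  rw [mem_lower] at htl h
  have hvpos : 0 < t.val := htl.1
  have hvlt : t.val < p := ZMod.val_lt t
  have hneg : (-t).val = p - t.val := by
    rw [ZMod.neg_val, if_neg ht0]
  obtain ⟨k, hk⟩ := hodd
  omega

lemma card_lower (hodd : Odd p) : (lower p).card = (p - 1) / 2 := by
  classical
  have h1 : (lower p).card = ((range p).filter (fun v => 0 < v ∧ 2 * v < p)).card := by
    apply Finset.card_bij (fun t _ => t.val)
    · intro t ht
      rw [mem_lower] at ht
      simp only [mem_filter, mem_range]
      exact ⟨ZMod.val_lt t, ht⟩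
    · intro a _ b _ h
      exact ZMod.val_injective p h
    · intro v hv
      simp only [mem_filter, mem_range] at hv
      exact ⟨(v : ZMod p), by rw [mem_lower, ZMod.val_natCast_of_lt hv.1]; exact hv.2,
        ZMod.val_natCast_of_lt hv.1⟩
  have h2 : (range p).filter (fun v => 0 < v ∧ 2 * v < p) = Finset.Icc 1 ((p - 1) / 2) := by
    ext v
    simp only [mem_filter, mem_range, Finset.mem_Icc]
    obtain ⟨k, hk⟩ := hodd
    omega
  rw [h1, h2, Nat.card_Icc]
  omega


/-! ### Counting lemma -/

lemma count_mod (p r : ℕ) (hp : 0 < p) (P : ℕ → Prop) [DecidablePred P] :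
    ((range (p * r)).filter (fun v => P (v % p))).card
      = r * ((range p).filter P).card := by
  induction r with
  | zero => simp
  | succ r ih =>
    rw [Nat.mul_succ, Finset.range_add, filter_union, Finset.card_union_of_disjoint, ih]
    · have : ((range p).map (addLeftEmbedding (p * r))).filter (fun v => P (v % p))
          = ((range p).filter (fun v => P (v % p))).map (addLeftEmbedding (p * r)) := by
        rw [Finset.filter_map]
        congr 1
        apply Finset.filter_congr
        intro x hx
        simp only [Function.comp_apply, addLeftEmbedding_apply]
        rw [Nat.mul_add_mod]
      rw [this, Finset.card_map]
      have : (range p).filter (fun v => P (v % p)) = (range p).filter P := by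
        apply Finset.filter_congr
        intro x hx
        rw [mem_range] at hx
        rw [Nat.mod_eq_of_lt hx]
      rw [this, Nat.succ_mul, Nat.add_comm (r * _)]
    · exact (Finset.disjoint_filter_filter (Finset.disjoint_range_addLeftEmbedding _ _))

/-! ### Level of `ZMod (p ^ a)` -/

section PrimePow

/-- reduction mod `p`. -/
noncomputable def bar (p a : ℕ) [NeZero (p ^ a)] (x : ZMod (p ^ a)) : ZMod p :=
  (x.val : ZMod p)

variable {p a : ℕ} [NeZero (p ^ a)] [NeZero p]

lemma bar_add (ha : 0 < a) (x y : ZMod (p ^ a)) :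
    bar p a (x + y) = bar p a x + bar p a y := by
  rw [bar, bar, bar, ZMod.val_add, ← Nat.cast_add]
  rw [ZMod.natCast_eq_natCast_iff]
  exact (Nat.mod_modEq _ _).of_dvd (dvd_pow_self p ha.ne')

lemma bar_neg (ha : 0 < a) (x : ZMod (p ^ a)) : bar p a (-x) = - bar p a x := by
  have h1 : bar p a (x + (-x)) = bar p a x + bar p a (-x) := bar_add ha x (-x)
  rw [add_neg_cancel] at h1
  have h0 : bar p a (0 : ZMod (p ^ a)) = 0 := by simp [bar]
  rw [h0] at h1
  linear_combination -h1

lemma isUnit_iff_bar (hp : p.Prime) (ha : 0 < a) (x : ZMod (p ^ a)) :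
    IsUnit x ↔ bar p a x ≠ 0 := by
  rw [bar, Ne, ZMod.natCast_eq_zero_iff]
  conv_lhs => rw [← ZMod.natCast_zmod_val x]
  rw [ZMod.isUnit_iff_coprime, Nat.coprime_pow_right_iff ha, Nat.coprime_comm,
    hp.coprime_iff_not_dvd]

/-- The "half" subset of `ZMod (p ^ a)`. -/
noncomputable def halfSet (p a : ℕ) [NeZero (p ^ a)] [NeZero p] : Finset (ZMod (p ^ a)) :=
  Finset.univ.filter (fun x => bar p a x ∈ lower p)

lemma mem_halfSet {x : ZMod (p ^ a)} : x ∈ halfSet p a ↔ bar p a x ∈ lower p := by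
  simp [halfSet]

lemma halfSet_isUnit (hp : p.Prime) (ha : 0 < a) {x : ZMod (p ^ a)}
    (hx : x ∈ halfSet p a) : IsUnit x := by
  rw [isUnit_iff_bar hp ha]
  exact lower_ne_zero (mem_halfSet.mp hx)

lemma halfSet_add_isUnit (hp : p.Prime) (ha : 0 < a) {x y : ZMod (p ^ a)}
    (hx : x ∈ halfSet p a) (hy : y ∈ halfSet p a) : IsUnit (x + y) := by
  rw [isUnit_iff_bar hp ha, bar_add ha x y]
  exact lower_add_ne_zero (mem_halfSet.mp hx) (mem_halfSet.mp hy)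

lemma one_mem_halfSet (hp3 : 2 < p) (h1 : 1 < p ^ a) : (1 : ZMod (p ^ a)) ∈ halfSet p a := by
  haveI : Fact (1 < p ^ a) := ⟨h1⟩
  haveI : Fact (1 < p) := ⟨by omega⟩
  rw [mem_halfSet]
  have hb : bar p a 1 = (1 : ZMod p) := by
    rw [bar, ZMod.val_one]
    simp
  rw [hb, mem_lower, ZMod.val_one]
  omega

lemma zero_not_mem_halfSet : (0 : ZMod (p ^ a)) ∉ halfSet p a := by
  rw [mem_halfSet]
  intro h
  exact lower_ne_zero h (by simp [bar])

/-- representative choice among `x, -x`. -/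
noncomputable def rep (p a : ℕ) [NeZero (p ^ a)] [NeZero p] (x : ZMod (p ^ a)) : ZMod (p ^ a) :=
  if x ∈ halfSet p a then x else -x

lemma rep_mem (hp : p.Prime) (hodd : Odd p) (ha : 0 < a) {x : ZMod (p ^ a)}
    (hx : IsUnit x) : rep p a x ∈ halfSet p a := by
  rw [rep]
  split_ifs with h
  · exact h
  · rw [mem_halfSet, bar_neg ha]
    exact lower_neg hodd ((isUnit_iff_bar hp ha x).mp hx) (fun hc => h (mem_halfSet.mpr hc))

lemma rep_eq_cases {x y : ZMod (p ^ a)} (h : rep p a x = rep p a y) : y = x ∨ y = -x := by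
  rw [rep, rep] at h
  split_ifs at h with h1 h2 h2
  · exact Or.inl h.symm
  · right; rw [h, neg_neg]
  · right; exact h.symm
  · exact Or.inl (neg_injective h).symm

lemma card_halfSet (hp : p.Prime) (hodd : Odd p) (ha : 0 < a) :
    (halfSet p a).card = (p ^ a).totient / 2 := by
  classical
  have hppos : 0 < p := hp.pos
  have h1 : (halfSet p a).card
      = ((range (p ^ a)).filter (fun v => 0 < v % p ∧ 2 * (v % p) < p)).card := by
    apply Finset.card_bij (fun t _ => t.val)
    · intro t ht
      rw [mem_halfSet, mem_lower, bar, ZMod.val_natCast] at ht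
      simp only [mem_filter, mem_range]
      exact ⟨ZMod.val_lt t, ht⟩
    · intro x _ y _ h
      exact ZMod.val_injective _ h
    · intro v hv
      simp only [mem_filter, mem_range] at hv
      refine ⟨(v : ZMod (p ^ a)), ?_, ZMod.val_natCast_of_lt hv.1⟩
      rw [mem_halfSet, mem_lower, bar, ZMod.val_natCast, ZMod.val_natCast_of_lt hv.1]
      exact hv.2
  have h2 : p ^ a = p * p ^ (a - 1) := by
    rw [← pow_succ']
    congr 1
    omega
  have hc : ((range (p * p ^ (a - 1))).filter (fun v => 0 < v % p ∧ 2 * (v % p) < p)).card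
      = p ^ (a - 1) * ((range p).filter (fun w => 0 < w ∧ 2 * w < p)).card :=
    count_mod p _ hppos (fun w => 0 < w ∧ 2 * w < p)
  have h3 : ((range p).filter (fun v => 0 < v ∧ 2 * v < p)).card = (p - 1) / 2 := by
    have h4 : (range p).filter (fun v => 0 < v ∧ 2 * v < p) = Finset.Icc 1 ((p - 1) / 2) := by
      ext v
      simp only [mem_filter, mem_range, Finset.mem_Icc]
      obtain ⟨k, hk⟩ := hodd
      omega
    rw [h4, Nat.card_Icc]
    omega
  rw [h1]
  conv_lhs => rw [h2]
  rw [hc, h3, Nat.totient_prime_pow hp ha]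
  have heven : 2 ∣ (p - 1) := by
    obtain ⟨k, hk⟩ := hodd
    omega
  rw [Nat.mul_div_assoc _ heven]

end PrimePow

lemma pi_isUnit_iff {ι : Type*} {M : ι → Type*} [∀ i, CommMonoid (M i)]
    {x : Π i, M i} : IsUnit x ↔ ∀ i, IsUnit (x i) := by
  constructor
  · intro h i
    exact h.map (Pi.evalMonoidHom M i)
  · intro h
    rw [isUnit_iff_exists_inv]
    refine ⟨fun i => ((h i).unit⁻¹ : (M i)ˣ), ?_⟩
    funext i
    have h2 := (h i).unit.mul_inv
    rw [Pi.mul_apply, Pi.one_apply]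
    rw [(h i).unit_spec] at h2
    exact h2

section PiLevel

variable {ι : Type*} [Fintype ι] [DecidableEq ι] (P A : ι → ℕ)
  [∀ i, NeZero (P i ^ A i)] [∀ i, NeZero (P i)]

/-- the special clique elements: `0` at coordinate `j` and `1` elsewhere. -/
def eV (j : ι) : Π i, ZMod (P i ^ A i) := fun i => if i = j then 0 else 1

/-- the clique. -/
noncomputable def cliqueSet : Finset (Π i, ZMod (P i ^ A i)) :=
  (Fintype.piFinset fun i => halfSet (P i) (A i)) ∪ (Finset.univ.image (eV P A))

variable {P A}

lemma hp3 (hP : ∀ i, (P i).Prime) (hO : ∀ i, Odd (P i)) (i : ι) : 2 < P i := by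
  have h2 := (hP i).two_le
  rcases hO i with ⟨k, hk⟩
  omega

lemma hq3 (hP : ∀ i, (P i).Prime) (hO : ∀ i, Odd (P i)) (hA : ∀ i, 0 < A i) (i : ι) :
    2 < P i ^ A i := by
  calc 2 < P i := hp3 hP hO i
  _ = P i ^ 1 := (pow_one _).symm
  _ ≤ P i ^ A i := Nat.pow_le_pow_right (hP i).pos (hA i)

lemma eV_injective (hP : ∀ i, (P i).Prime) (hO : ∀ i, Odd (P i)) (hA : ∀ i, 0 < A i) :
    Function.Injective (eV P A) := by
  intro j k h
  by_contra hjk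
  have h1 := congrFun h j
  simp only [eV, if_pos rfl, if_neg hjk] at h1
  haveI : Fact (1 < P j ^ A j) := ⟨by have := hq3 hP hO hA j; omega⟩
  exact zero_ne_one h1

lemma eV_not_mem_piFinset (j : ι) :
    eV P A j ∉ Fintype.piFinset fun i => halfSet (P i) (A i) := by
  intro h
  rw [Fintype.mem_piFinset] at h
  have := h j
  simp only [eV, if_pos rfl] at this
  exact zero_not_mem_halfSet this

lemma isClique_cliqueSet (hP : ∀ i, (P i).Prime) (hO : ∀ i, Odd (P i)) (hA : ∀ i, 0 < A i) :
    (unitaryCayley (Π i, ZMod (P i ^ A i))).IsClique (cliqueSet P A) := by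
  have hone : ∀ i, (1 : ZMod (P i ^ A i)) ∈ halfSet (P i) (A i) := fun i =>
    one_mem_halfSet (hp3 hP hO i) (by have := hq3 hP hO hA i; omega)
  intro x hx y hy hxy
  refine ⟨hxy, ?_⟩
  rw [pi_isUnit_iff]
  intro i
  rw [Finset.mem_coe, cliqueSet, Finset.mem_union] at hx hy
  have key : ∀ u v : ZMod (P i ^ A i), u ∈ halfSet (P i) (A i) → v ∈ halfSet (P i) (A i) →
      IsUnit (u + v) := fun u v hu hv => halfSet_add_isUnit (hP i) (hA i) hu hv
  rcases hx with hx | hx <;> rcases hy with hy | hy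
  · exact key _ _ ((Fintype.mem_piFinset).mp hx i) ((Fintype.mem_piFinset).mp hy i)
  · obtain ⟨j, -, rfl⟩ := Finset.mem_image.mp hy
    by_cases hij : i = j
    · subst hij
      simp only [Pi.add_apply, eV, if_pos rfl, if_true]
      rw [add_zero]
      exact halfSet_isUnit (hP i) (hA i) ((Fintype.mem_piFinset).mp hx i)
    · simp only [Pi.add_apply, eV, if_neg hij]
      exact key _ _ ((Fintype.mem_piFinset).mp hx i) (hone i)
  · obtain ⟨j, -, rfl⟩ := Finset.mem_image.mp hx
    by_cases hij : i = j
    · subst hij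
      simp only [Pi.add_apply, eV, if_pos rfl, if_true]
      rw [zero_add]
      exact halfSet_isUnit (hP i) (hA i) ((Fintype.mem_piFinset).mp hy i)
    · simp only [Pi.add_apply, eV, if_neg hij]
      exact key _ _ (hone i) ((Fintype.mem_piFinset).mp hy i)
  · obtain ⟨j, -, rfl⟩ := Finset.mem_image.mp hx
    obtain ⟨k, -, rfl⟩ := Finset.mem_image.mp hy
    have hjk : j ≠ k := fun h => hxy (by rw [h])
    simp only [Pi.add_apply, eV]
    by_cases hij : i = j
    · rw [if_pos hij, if_neg (by rw [hij]; exact hjk), zero_add]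
      exact isUnit_one
    · rw [if_neg hij]
      by_cases hik : i = k
      · rw [if_pos hik, add_zero]
        exact isUnit_one
      · rw [if_neg hik]
        exact key _ _ (hone i) (hone i)

lemma card_cliqueSet (hP : ∀ i, (P i).Prime) (hO : ∀ i, Odd (P i)) (hA : ∀ i, 0 < A i) :
    (cliqueSet P A).card = Fintype.card ι + ∏ i, (P i ^ A i).totient / 2 := by
  rw [cliqueSet, Finset.card_union_of_disjoint, Fintype.card_piFinset,
    Finset.card_image_of_injective _ (eV_injective hP hO hA), Finset.card_univ]
  · rw [add_comm]
    congr 1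
    exact Finset.prod_congr rfl fun i _ => card_halfSet (hP i) (hO i) (hA i)
  · rw [Finset.disjoint_right]
    intro x hx
    obtain ⟨j, -, rfl⟩ := Finset.mem_image.mp hx
    exact eV_not_mem_piFinset j

/-- color type -/
abbrev ColorType (P A : ι → ℕ) [∀ i, NeZero (P i ^ A i)] [∀ i, NeZero (P i)] : Type _ :=
  (Π i, {t : ZMod (P i ^ A i) // t ∈ halfSet (P i) (A i)}) ⊕ ι

lemma card_colorType (hP : ∀ i, (P i).Prime) (hO : ∀ i, Odd (P i)) (hA : ∀ i, 0 < A i) :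
    Fintype.card (ColorType P A) = Fintype.card ι + ∏ i, (P i ^ A i).totient / 2 := by
  rw [show Fintype.card (ColorType P A)
      = Fintype.card (Π i, {t : ZMod (P i ^ A i) // t ∈ halfSet (P i) (A i)})
        + Fintype.card ι from Fintype.card_sum, Fintype.card_pi, add_comm]
  congr 1
  refine Finset.prod_congr rfl fun i _ => ?_
  rw [Fintype.card_coe]
  exact card_halfSet (hP i) (hO i) (hA i)

/-- the coloring. -/
noncomputable def theColoring (hP : ∀ i, (P i).Prime) (hO : ∀ i, Odd (P i)) (hA : ∀ i, 0 < A i) :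
    (unitaryCayley (Π i, ZMod (P i ^ A i))).Coloring (ColorType P A) := by
  classical
  refine SimpleGraph.Coloring.mk
    (fun x =>
      if h : ∃ i, bar (P i) (A i) (x i) = 0 then Sum.inr h.choose
      else Sum.inl (fun i => ⟨rep (P i) (A i) (x i),
        rep_mem (hP i) (hO i) (hA i)
          ((isUnit_iff_bar (hP i) (hA i) (x i)).mpr (not_exists.mp h i))⟩))
    ?_
  intro x y hadj hc
  obtain ⟨hne, hunit⟩ := hadj
  rw [pi_isUnit_iff] at hunit
  split_ifs at hc with h1 h2 h2
  · -- both have a zero coordinate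
    rw [Sum.inr.injEq] at hc
    have hx0 : bar (P h1.choose) (A h1.choose) (x h1.choose) = 0 := h1.choose_spec
    have hy0 : bar (P h2.choose) (A h2.choose) (y h2.choose) = 0 := h2.choose_spec
    rw [← hc] at hy0
    set i := h1.choose
    have := hunit i
    rw [Pi.add_apply, isUnit_iff_bar (hP i) (hA i), bar_add (hA i)] at this
    rw [hx0, hy0, add_zero] at this
    exact this rfl
  all_goals try exact Sum.noConfusion hc
  all_goals {
    have hc' := Sum.inl.inj hc
    obtain ⟨i, hi⟩ := Function.ne_iff.mp hne
    have hrep : rep (P i) (A i) (x i) = rep (P i) (A i) (y i) :=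
      congrArg Subtype.val (congrFun hc' i)
    rcases rep_eq_cases hrep with h | h
    · exact hi h.symm
    · haveI : Nontrivial (ZMod (P i ^ A i)) := by
        haveI : Fact (1 < P i ^ A i) := ⟨by have := hq3 hP hO hA i; omega⟩
        infer_instance
      have hu := hunit i
      rw [Pi.add_apply, h, add_neg_cancel] at hu
      exact not_isUnit_zero hu }

end PiLevel

lemma adj_map {R S : Type*} [CommRing R] [CommRing S] (e : R ≃+* S) {x y : R}
    (h : (unitaryCayley R).Adj x y) : (unitaryCayley S).Adj (e x) (e y) :=
  ⟨fun hc => h.1 (e.injective hc), by rw [← map_add]; exact h.2.map e.toRingHom⟩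

end UAC

open UAC

theorem stmt_1 (n : ℕ) (hpos : 0 < n) (hodd : Odd n) (m : ℕ)
    (hm : n.primeFactors.card = m) :
    (unitaryCayley (ZMod n)).cliqueNum = m + n.totient / 2 ^ m ∧
    (unitaryCayley (ZMod n)).chromaticNumber = ((m + n.totient / 2 ^ m : ℕ) : ℕ∞) := by
  classical
  haveI : NeZero n := ⟨hpos.ne'⟩
  set ι := {x // x ∈ n.primeFactors} with hι
  set P : ι → ℕ := fun i => (i : ℕ) with hPdef
  set A : ι → ℕ := fun i => n.factorization (i : ℕ) with hAdef
  have hP : ∀ i, (P i).Prime := fun i => Nat.prime_of_mem_primeFactors i.2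
  have hO : ∀ i, Odd (P i) := by
    intro i
    refine (hP i).odd_of_ne_two ?_
    intro h2
    have hdvd := Nat.dvd_of_mem_primeFactors i.2
    have h2' : (i : ℕ) = 2 := h2
    rw [h2'] at hdvd
    have := Nat.odd_iff.mp hodd
    omega
  have hA : ∀ i, 0 < A i := fun i =>
    Nat.pos_of_ne_zero (Finsupp.mem_support_iff.mp
      (by rw [Nat.support_factorization]; exact i.2))
  haveI hNZ1 : ∀ i : ι, NeZero (P i ^ A i) := fun i => ⟨pow_ne_zero _ (hP i).pos.ne'⟩
  haveI hNZ2 : ∀ i : ι, NeZero (P i) := fun i => ⟨(hP i).pos.ne'⟩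
  have hprodn : ∏ i : ι, P i ^ A i = n := by
    rw [Finset.prod_coe_sort n.primeFactors (fun p => p ^ n.factorization p)]
    exact Nat.factorization_prod_pow_eq_self hpos.ne'
  have hcop : Pairwise (Function.onFun Nat.Coprime fun i : ι => P i ^ A i) := by
    intro i j hij
    exact ((Nat.coprime_primes (hP i) (hP j)).mpr (fun h => hij (Subtype.ext h))).pow _ _
  let e : ZMod n ≃+* Π i : ι, ZMod (P i ^ A i) :=
    (ZMod.ringEquivCongr hprodn.symm).trans (ZMod.prodEquivPi _ hcop)
  have hmι : Fintype.card ι = m := by rw [Fintype.card_coe]; exact hm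
  -- totient arithmetic
  have hTot : n.totient = ∏ i : ι, (P i ^ A i).totient := by
    rw [Finset.prod_coe_sort n.primeFactors (fun p => (p ^ n.factorization p).totient)]
    rw [Nat.totient_eq_prod_factorization hpos.ne']
    have hrfl : (n.factorization.prod fun p k => p ^ (k - 1) * (p - 1))
        = ∏ p ∈ n.primeFactors, p ^ (n.factorization p - 1) * (p - 1) := rfl
    rw [hrfl]
    refine Finset.prod_congr rfl fun p hp' => ?_
    rw [Nat.totient_prime_pow (Nat.prime_of_mem_primeFactors hp')
      (Nat.pos_of_ne_zero (Finsupp.mem_support_iff.mp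
        (by rw [Nat.support_factorization]; exact hp')))]
  have harith : m + n.totient / 2 ^ m
      = Fintype.card ι + ∏ i : ι, (P i ^ A i).totient / 2 := by
    have heven : ∀ i : ι, (P i ^ A i).totient = 2 * ((P i ^ A i).totient / 2) := by
      intro i
      have h2d : 2 ∣ (P i ^ A i).totient := (Nat.totient_even (hq3 hP hO hA i)).two_dvd
      omega
    have h1 : n.totient = 2 ^ m * ∏ i : ι, (P i ^ A i).totient / 2 := by
      rw [hTot]
      calc ∏ i : ι, (P i ^ A i).totient
          = ∏ i : ι, 2 * ((P i ^ A i).totient / 2) :=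
            Finset.prod_congr rfl fun i _ => heven i
        _ = (∏ _i : ι, 2) * ∏ i : ι, (P i ^ A i).totient / 2 := Finset.prod_mul_distrib
        _ = 2 ^ m * ∏ i : ι, (P i ^ A i).totient / 2 := by
            rw [Finset.prod_const, Finset.card_univ, hmι]
    rw [h1, Nat.mul_div_cancel_left _ (pow_pos two_pos m), hmι]
  -- clique
  set S : Finset (ZMod n) := (cliqueSet P A).image e.symm with hSdef
  have hSclique : (unitaryCayley (ZMod n)).IsClique S := by
    intro x hx y hy hne
    rw [hSdef, Finset.coe_image] at hx hy
    obtain ⟨u, hu, rfl⟩ := hx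
    obtain ⟨v, hv, rfl⟩ := hy
    exact adj_map e.symm
      (isClique_cliqueSet hP hO hA hu hv (fun h => hne (congrArg _ h)))
  have hScard : S.card = m + n.totient / 2 ^ m := by
    rw [hSdef, Finset.card_image_of_injective _ e.symm.injective,
      card_cliqueSet hP hO hA, harith]
  -- coloring
  have hcol : (unitaryCayley (ZMod n)).Colorable (m + n.totient / 2 ^ m) := by
    have C1 : (unitaryCayley (ZMod n)).Coloring (ColorType P A) :=
      SimpleGraph.Coloring.mk (fun x => theColoring hP hO hA (e x))
        (fun hadj => (theColoring hP hO hA).valid (adj_map e hadj))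
    have h2 := C1.colorable
    rwa [card_colorType hP hO hA, ← harith] at h2
  constructor
  · apply le_antisymm
    · obtain ⟨s, hs⟩ := (unitaryCayley (ZMod n)).exists_isNClique_cliqueNum
      rw [← hs.2]
      exact hs.1.card_le_of_colorable hcol
    · rw [← hScard]
      exact SimpleGraph.IsClique.card_le_cliqueNum (tc := hSclique)
  · apply le_antisymm
    · exact_mod_cast hcol.chromaticNumber_le
    · have h3 := hSclique.card_le_chromaticNumber
      rwa [hScard] at h3
end

section
/- If q > p ≥ 3 are primes, then the achromatic number of the unitary addition Cayley graph U(ℤ_{pq}) is at least (pq + 1)/2. -/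
namespace Stmt2Aux

lemma isUnit_pair {R S : Type*} [CommMonoid R] [CommMonoid S] {a : R} {b : S}
    (ha : IsUnit a) (hb : IsUnit b) : IsUnit (a, b) := by
  obtain ⟨a', ha'⟩ := isUnit_iff_exists_inv.mp ha
  obtain ⟨b', hb'⟩ := isUnit_iff_exists_inv.mp hb
  exact isUnit_iff_exists_inv.mpr ⟨(a', b'), Prod.ext ha' hb'⟩

section Basic
variable {p : ℕ} [hp : Fact p.Prime]

instance : NeZero p := ⟨(Fact.out : p.Prime).ne_zero⟩

lemma one_ne_zero' : (1 : ZMod p) ≠ 0 := by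
  haveI : Nontrivial (ZMod p) := ZMod.nontrivial_iff.mpr (Fact.out : p.Prime).ne_one
  exact one_ne_zero

lemma two_ne_zero' (h3 : 3 ≤ p) : (2 : ZMod p) ≠ 0 := by
  have : ((2:ℕ) : ZMod p) ≠ 0 := by
    rw [Ne, ZMod.natCast_eq_zero_iff]
    intro h
    have := Nat.le_of_dvd (by norm_num) h
    omega
  simpa using this

lemma three_ne_zero' (h5 : 5 ≤ p) : (3 : ZMod p) ≠ 0 := by
  have : ((3:ℕ) : ZMod p) ≠ 0 := by
    rw [Ne, ZMod.natCast_eq_zero_iff]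
    intro h
    have := Nat.le_of_dvd (by norm_num) h
    omega
  simpa using this

lemma neg_two_ne_zero (h3 : 3 ≤ p) : (-2 : ZMod p) ≠ 0 := by
  simpa using (neg_ne_zero.mpr (two_ne_zero' (p := p) h3))

lemma neg_one_ne_zero' : (-1 : ZMod p) ≠ 0 := by
  simpa using neg_ne_zero.mpr (one_ne_zero' (p := p))

lemma neg_one_ne_one (h3 : 3 ≤ p) : (-1 : ZMod p) ≠ 1 := by
  intro h
  exact two_ne_zero' h3 (by linear_combination -h)

lemma two_mul_ne_zero {a : ZMod p} (h3 : 3 ≤ p) (ha : a ≠ 0) : a + a ≠ 0 := by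
  intro h
  rcases mul_eq_zero.mp (show (2 : ZMod p) * a = 0 by linear_combination h) with h' | h'
  · exact two_ne_zero' h3 h'
  · exact ha h'

lemma not_both_zero {a b : ZMod p} (h3 : 3 ≤ p) (ha : a ≠ 0) : a + b ≠ 0 ∨ a - b ≠ 0 := by
  by_contra h
  push_neg at h
  exact two_mul_ne_zero h3 ha (by linear_combination h.1 + h.2)

lemma add_ne₁ {a b : ZMod p} (h : a ≠ -b) : a + b ≠ 0 := fun h' => h (by linear_combination h')

lemma add_ne₂ {a b : ZMod p} (h : a ≠ b) : a + -b ≠ 0 := fun h' => h (by linear_combination h')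

lemma val_half_neg (h3 : 3 ≤ p) {a : ZMod p} (ha : a ≠ 0) (h : ¬ 2 * a.val < p) :
    2 * (-a).val < p := by
  have hodd : p % 2 = 1 := Nat.odd_iff.mp ((Fact.out : p.Prime).odd_of_ne_two (by omega))
  have h1 : (-a).val = p - a.val := by rw [ZMod.neg_val, if_neg ha]
  have h2 : a.val < p := ZMod.val_lt a
  omega

lemma half_ne_neg (h3 : 3 ≤ p) {a c : ZMod p} (ha : a ≠ 0) (hha : 2 * a.val < p)
    (hhc : 2 * c.val < p) : c ≠ -a := by
  intro h
  have h1 : (-a).val = p - a.val := by rw [ZMod.neg_val, if_neg ha]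
  have h2 : a.val < p := ZMod.val_lt a
  rw [h, h1] at hhc
  omega

end Basic

def tau {q : ℕ} (b : ZMod q) : ZMod q := if b = -1 then 2 else b + 1

def tau' {q : ℕ} (c : ZMod q) : ZMod q := if c = 2 then -1 else c - 1

section Tau
variable {q : ℕ} [Fact q.Prime] (h5 : 5 ≤ q)

include h5 in
lemma tau_ne_zero {b : ZMod q} (hb : b ≠ 0) : tau b ≠ 0 := by
  unfold tau
  split_ifs with h
  · exact two_ne_zero' (by omega)
  · intro hc; exact h (by linear_combination hc)

lemma tau_ne_one {b : ZMod q} (hb : b ≠ 0) : tau b ≠ 1 := by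
  unfold tau
  split_ifs with h
  · intro hc
    exact one_ne_zero' (p := q) (by linear_combination hc)
  · intro hc; exact hb (by linear_combination hc)

lemma tau'_ne_zero {c : ZMod q} (hc1 : c ≠ 1) : tau' c ≠ 0 := by
  unfold tau'
  split_ifs with h
  · simpa using one_ne_zero' (p := q)
  · intro hc; exact hc1 (by linear_combination hc)

include h5 in
lemma tau'_ne_one {c : ZMod q} : tau' c ≠ 1 := by
  unfold tau'
  split_ifs with h
  · intro hc
    exact two_ne_zero' (p := q) (by omega) (by linear_combination -hc)
  · intro hc; exact h (by linear_combination hc)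

lemma tau'_tau {b : ZMod q} (hb1 : b ≠ 1) : tau' (tau b) = b := by
  unfold tau tau'
  by_cases h : b = -1
  · rw [if_pos h, if_pos rfl, h]
  · rw [if_neg h, if_neg (fun hc => hb1 (by linear_combination hc))]
    ring

lemma tau_tau' {c : ZMod q} (hc0 : c ≠ 0) : tau (tau' c) = c := by
  unfold tau tau'
  by_cases h : c = 2
  · rw [if_pos h, if_pos rfl, h]
  · rw [if_neg h, if_neg (fun hc => hc0 (by linear_combination hc))]
    ring

lemma tau_inj {b c : ZMod q} (hb1 : b ≠ 1) (hc1 : c ≠ 1) (h : tau b = tau c) : b = c := by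
  have h1 := tau'_tau hb1
  rw [h, tau'_tau hc1] at h1
  exact h1.symm

include h5 in
lemma tau_add_tau {b c : ZMod q} (hb1 : b ≠ 1) (hc1 : c ≠ 1) (h : b + c = 0) :
    tau b + tau c = 2 := by
  have hbn : b ≠ -1 := fun hb => hc1 (by linear_combination h - hb)
  have hcn : c ≠ -1 := fun hc => hb1 (by linear_combination h - hc)
  unfold tau
  rw [if_neg hbn, if_neg hcn]
  linear_combination h

end Tau

end Stmt2Aux

namespace Stmt2Aux

section Pi
variable {p q : ℕ} [Fact p.Prime] [Fact q.Prime]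

def pi (p q : ℕ) (v : ZMod p × ZMod q) : ZMod p × ZMod q :=
  if v.1 = 0 then
    (if v.2 = 0 then (0, 0) else if v.2 = 1 then (-1, -1) else (1, -v.2))
  else if v.1 = 1 then
    (if v.2 = 0 then (-1, 1) else if v.2 = -1 then (-1, 0) else (0, -v.2))
  else if v.1 = -1 then
    (if v.2 = 0 then (1, -1) else if v.2 = 1 then (1, 0) else if v.2 = -1 then (0, 1)
     else (-1, -v.2))
  else
    (if v.2 = 0 then (-v.1, 1) else if v.2 = 1 then (-v.1, 0)
     else (-v.1, if 2 * v.1.val < p then tau v.2 else tau' v.2))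

variable (h3 : 3 ≤ p) (h5 : 5 ≤ q)
variable {a : ZMod p} {b : ZMod q}

lemma pi_00 : pi p q (0, 0) = (0, 0) := by simp [pi]

include h5 in
lemma pi_01 : pi p q (0, 1) = (-1, -1) := by
  simp [pi, one_ne_zero' (p := q)]

lemma pi_0b (hb0 : b ≠ 0) (hb1 : b ≠ 1) : pi p q (0, b) = (1, -b) := by
  simp [pi, hb0, hb1]

include h3 in
lemma pi_N (ha0 : a ≠ 0) (han : a ≠ -1) : pi p q (a, 0) = (-a, 1) := by
  by_cases ha1 : a = 1
  · subst ha1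
    simp [pi, one_ne_zero' (p := p), one_ne_zero' (p := q), neg_one_ne_one (p := p) h3]
  · simp [pi, ha0, ha1, han, one_ne_zero' (p := q)]

include h3 h5 in
lemma pi_Npartner (ha0 : a ≠ 0) (ha1 : a ≠ 1) : pi p q (a, 1) = (-a, 0) := by
  by_cases han : a = -1
  · subst han
    simp [pi, neg_one_ne_zero' (p := p), neg_one_ne_one (p := p) h3, one_ne_zero' (p := q),
      neg_one_ne_one (p := q) (by omega)]
  · simp [pi, ha0, ha1, han, one_ne_zero' (p := q), neg_one_ne_one (p := q) (by omega)]

include h3 in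
lemma pi_Mpartner (hb0 : b ≠ 0) (hbn : b ≠ -1) : pi p q (1, b) = (0, -b) := by
  simp [pi, one_ne_zero' (p := p), neg_one_ne_one (p := p) h3, Ne.symm, hb0, hbn]

include h3 in
lemma pi_Nx : pi p q (-1, 0) = (1, -1) := by
  simp [pi, neg_one_ne_zero' (p := p), neg_one_ne_one (p := p) h3]

include h3 h5 in
lemma pi_ZPartner : pi p q (-1, -1) = (0, 1) := by
  simp [pi, neg_one_ne_zero' (p := p), neg_one_ne_one (p := p) h3,
    neg_one_ne_zero' (p := q), neg_one_ne_one (p := q) (by omega)]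

include h3 h5 in
lemma pi_W (hb0 : b ≠ 0) (hb1 : b ≠ 1) (hbn : b ≠ -1) : pi p q (-1, b) = (-1, -b) := by
  simp [pi, neg_one_ne_zero' (p := p), neg_one_ne_one (p := p) h3, hb0, hb1, hbn]

lemma pi_K (ha0 : a ≠ 0) (ha1 : a ≠ 1) (han : a ≠ -1) (hav : 2 * a.val < p)
    (hb0 : b ≠ 0) (hb1 : b ≠ 1) : pi p q (a, b) = (-a, tau b) := by
  simp [pi, ha0, ha1, han, hb0, hb1, hav]

lemma pi_K' (ha0 : a ≠ 0) (ha1 : a ≠ 1) (han : a ≠ -1) (hav : ¬ 2 * a.val < p)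
    (hb0 : b ≠ 0) (hb1 : b ≠ 1) : pi p q (a, b) = (-a, tau' b) := by
  simp [pi, ha0, ha1, han, hb0, hb1, hav]

end Pi
end Stmt2Aux

namespace Stmt2Aux
section Pi2
variable {p q : ℕ} [Fact p.Prime] [Fact q.Prime]
variable {a : ZMod p} {b : ZMod q}

lemma pi_1n (h3 : 3 ≤ p) (h5 : 5 ≤ q) : pi p q (1, -1) = (-1, 0) := by
  simp [pi, one_ne_zero' (p := p), neg_one_ne_one (p := p) h3,
    neg_one_ne_zero' (p := q)]

lemma half_not_neg (h3 : 3 ≤ p) (ha : a ≠ 0) (hav : 2 * a.val < p) :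
    ¬ 2 * (-a).val < p := by
  have h1 : (-a).val = p - a.val := by rw [ZMod.neg_val, if_neg ha]
  have h2 : a.val < p := ZMod.val_lt a
  have h0 : a.val ≠ 0 := fun h => ha (by rwa [← ZMod.val_eq_zero])
  omega

variable (h3 : 3 ≤ p) (h5 : 5 ≤ q)

include h3 h5

lemma pi_invol (v : ZMod p × ZMod q) : pi p q (pi p q v) = v := by
  have h3q : 3 ≤ q := by omega
  obtain ⟨a, b⟩ := v
  by_cases ha0 : a = 0
  · subst ha0
    by_cases hb0 : b = 0
    · subst hb0; rw [pi_00, pi_00]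
    · by_cases hb1 : b = 1
      · subst hb1; rw [pi_01 h5, pi_ZPartner h3 h5]
      · rw [pi_0b hb0 hb1, pi_Mpartner h3 (neg_ne_zero.mpr hb0)
          (fun h => hb1 (by linear_combination -h)), neg_neg]
  · by_cases ha1 : a = 1
    · subst ha1
      by_cases hb0 : b = 0
      · subst hb0
        rw [pi_N h3 one_ne_zero' (fun h => neg_one_ne_one (p := p) h3 h.symm),
          pi_Npartner h3 h5 neg_one_ne_zero' (neg_one_ne_one h3), neg_neg]
      · by_cases hbn : b = -1
        · subst hbn; rw [pi_1n h3 h5, pi_Nx h3]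
        · rw [pi_Mpartner h3 hb0 hbn, pi_0b (neg_ne_zero.mpr hb0)
            (fun h => hbn (by linear_combination -h)), neg_neg]
    · by_cases han : a = -1
      · subst han
        by_cases hb0 : b = 0
        · subst hb0; rw [pi_Nx h3, pi_1n h3 h5]
        · by_cases hb1 : b = 1
          · subst hb1
            rw [pi_Npartner h3 h5 neg_one_ne_zero' (neg_one_ne_one h3), neg_neg,
              pi_N h3 one_ne_zero' (fun h => neg_one_ne_one (p := p) h3 h.symm)]
          · by_cases hbn : b = -1
            · subst hbn; rw [pi_ZPartner h3 h5, pi_01 h5]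
            · rw [pi_W h3 h5 hb0 hb1 hbn, pi_W h3 h5 (neg_ne_zero.mpr hb0)
                (fun h => hbn (by linear_combination -h))
                (fun h => hb1 (by linear_combination -h)), neg_neg]
      · by_cases hb0 : b = 0
        · subst hb0
          rw [pi_N h3 ha0 han, pi_Npartner h3 h5 (neg_ne_zero.mpr ha0)
            (fun h => han (by linear_combination -h)), neg_neg]
        · by_cases hb1 : b = 1
          · subst hb1
            rw [pi_Npartner h3 h5 ha0 ha1, pi_N h3 (neg_ne_zero.mpr ha0)
              (fun h => ha1 (by linear_combination -h)), neg_neg]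
          · by_cases hav : 2 * a.val < p
            · rw [pi_K ha0 ha1 han hav hb0 hb1,
                pi_K' (neg_ne_zero.mpr ha0) (fun h => han (by linear_combination -h))
                  (fun h => ha1 (by linear_combination -h)) (half_not_neg h3 ha0 hav)
                  (tau_ne_zero h5 hb0) (tau_ne_one hb0),
                neg_neg, tau'_tau hb1]
            · rw [pi_K' ha0 ha1 han hav hb0 hb1,
                pi_K (neg_ne_zero.mpr ha0) (fun h => han (by linear_combination -h))
                  (fun h => ha1 (by linear_combination -h)) (val_half_neg h3 ha0 hav)
                  (tau'_ne_zero hb1) (tau'_ne_one h5),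
                neg_neg, tau_tau' hb0]

lemma pi_sum (v : ZMod p × ZMod q) :
    v.1 + (pi p q v).1 = 0 ∨ v.2 + (pi p q v).2 = 0 := by
  obtain ⟨a, b⟩ := v
  by_cases ha0 : a = 0
  · subst ha0
    by_cases hb0 : b = 0
    · subst hb0; rw [pi_00]; left; simp
    · by_cases hb1 : b = 1
      · subst hb1; rw [pi_01 h5]; right; simp
      · rw [pi_0b hb0 hb1]; right; simp
  · by_cases ha1 : a = 1
    · subst ha1
      by_cases hb0 : b = 0
      · subst hb0
        rw [pi_N h3 one_ne_zero' (fun h => neg_one_ne_one (p := p) h3 h.symm)]; left; simp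
      · by_cases hbn : b = -1
        · subst hbn; rw [pi_1n h3 h5]; left; simp
        · rw [pi_Mpartner h3 hb0 hbn]; right; simp
    · by_cases han : a = -1
      · subst han
        by_cases hb0 : b = 0
        · subst hb0; rw [pi_Nx h3]; left; simp
        · by_cases hb1 : b = 1
          · subst hb1
            rw [pi_Npartner h3 h5 neg_one_ne_zero' (neg_one_ne_one h3)]; left; simp
          · by_cases hbn : b = -1
            · subst hbn; rw [pi_ZPartner h3 h5]; right; simp
            · rw [pi_W h3 h5 hb0 hb1 hbn]; right; simp
      · by_cases hb0 : b = 0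
        · subst hb0; rw [pi_N h3 ha0 han]; left; simp
        · by_cases hb1 : b = 1
          · subst hb1; rw [pi_Npartner h3 h5 ha0 ha1]; left; simp
          · by_cases hav : 2 * a.val < p
            · rw [pi_K ha0 ha1 han hav hb0 hb1]; left; simp
            · rw [pi_K' ha0 ha1 han hav hb0 hb1]; left; simp

lemma pi_fix {v : ZMod p × ZMod q} (h : pi p q v = v) : v = (0, 0) := by
  have h3q : 3 ≤ q := by omega
  obtain ⟨a, b⟩ := v
  by_cases ha0 : a = 0
  · subst ha0
    by_cases hb0 : b = 0
    · subst hb0; rfl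
    · exfalso
      by_cases hb1 : b = 1
      · subst hb1; rw [pi_01 h5] at h
        exact neg_one_ne_zero' (p := p) (congrArg Prod.fst h)
      · rw [pi_0b hb0 hb1, Prod.mk.injEq] at h
        exact one_ne_zero' (p := p) h.1
  · exfalso
    by_cases ha1 : a = 1
    · subst ha1
      by_cases hb0 : b = 0
      · subst hb0
        rw [pi_N h3 one_ne_zero' (fun h => neg_one_ne_one (p := p) h3 h.symm),
          Prod.mk.injEq] at h
        exact neg_one_ne_one h3 h.1
      · by_cases hbn : b = -1
        · subst hbn; rw [pi_1n h3 h5, Prod.mk.injEq] at h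
          exact neg_one_ne_one h3 h.1
        · rw [pi_Mpartner h3 hb0 hbn, Prod.mk.injEq] at h
          exact one_ne_zero' (p := p) h.1.symm
    · by_cases han : a = -1
      · subst han
        by_cases hb0 : b = 0
        · subst hb0; rw [pi_Nx h3, Prod.mk.injEq] at h
          exact neg_one_ne_one h3 h.1.symm
        · by_cases hb1 : b = 1
          · subst hb1
            rw [pi_Npartner h3 h5 neg_one_ne_zero' (neg_one_ne_one h3), neg_neg,
              Prod.mk.injEq] at h
            exact neg_one_ne_one h3 h.1.symm
          · by_cases hbn : b = -1
            · subst hbn; rw [pi_ZPartner h3 h5, Prod.mk.injEq] at h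
              exact neg_one_ne_zero' (p := p) h.1.symm
            · rw [pi_W h3 h5 hb0 hb1 hbn, Prod.mk.injEq] at h
              exact two_mul_ne_zero h3q hb0 (by linear_combination - h.2)
      · have key : -a = a → False := fun hh =>
          two_mul_ne_zero h3 ha0 (by linear_combination -hh)
        by_cases hb0 : b = 0
        · subst hb0; rw [pi_N h3 ha0 han, Prod.mk.injEq] at h
          exact key h.1
        · by_cases hb1 : b = 1
          · subst hb1; rw [pi_Npartner h3 h5 ha0 ha1, Prod.mk.injEq] at h
            exact key h.1
          · by_cases hav : 2 * a.val < p
            · rw [pi_K ha0 ha1 han hav hb0 hb1, Prod.mk.injEq] at h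
              exact key h.1
            · rw [pi_K' ha0 ha1 han hav hb0 hb1, Prod.mk.injEq] at h
              exact key h.1

end Pi2
end Stmt2Aux

namespace Stmt2Aux
section Canon
variable {p q : ℕ} [Fact p.Prime] [Fact q.Prime]
variable {a : ZMod p} {b : ZMod q}

def Canon (p q : ℕ) (w : ZMod p × ZMod q) : Prop :=
  w = (0, 0) ∨ w = (0, 1) ∨
  (∃ b : ZMod q, b ≠ 0 ∧ b ≠ 1 ∧ w = (0, b)) ∨
  (∃ a : ZMod p, a ≠ 0 ∧ a ≠ -1 ∧ w = (a, 0)) ∨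
  w = (-1, 0) ∨
  (∃ b : ZMod q, b ≠ 0 ∧ b ≠ 1 ∧ b ≠ -1 ∧ w = (-1, b)) ∨
  (∃ (a : ZMod p) (b : ZMod q), a ≠ 0 ∧ a ≠ 1 ∧ a ≠ -1 ∧ 2 * a.val < p ∧
    b ≠ 0 ∧ b ≠ 1 ∧ w = (a, b))

variable (h3 : 3 ≤ p) (h5 : 5 ≤ q)
include h3 h5

lemma norm (u : ZMod p × ZMod q) :
    ∃ w, (w = u ∨ w = pi p q u) ∧ Canon p q w := by
  obtain ⟨a, b⟩ := u
  by_cases ha0 : a = 0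
  · subst ha0
    by_cases hb0 : b = 0
    · exact ⟨(0, 0), Or.inl (by rw [hb0]), Or.inl rfl⟩
    · by_cases hb1 : b = 1
      · exact ⟨(0, 1), Or.inl (by rw [hb1]), Or.inr (Or.inl rfl)⟩
      · exact ⟨(0, b), Or.inl rfl, Or.inr (Or.inr (Or.inl ⟨b, hb0, hb1, rfl⟩))⟩
  · by_cases ha1 : a = 1
    · subst ha1
      by_cases hb0 : b = 0
      · subst hb0
        exact ⟨(1, 0), Or.inl rfl, Or.inr (Or.inr (Or.inr (Or.inl
          ⟨1, one_ne_zero', fun h => neg_one_ne_one h3 h.symm, rfl⟩)))⟩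
      · by_cases hbn : b = -1
        · subst hbn
          exact ⟨(-1, 0), Or.inr (pi_1n h3 h5).symm,
            Or.inr (Or.inr (Or.inr (Or.inr (Or.inl rfl))))⟩
        · refine ⟨(0, -b), Or.inr (pi_Mpartner h3 hb0 hbn).symm,
            Or.inr (Or.inr (Or.inl ⟨-b, neg_ne_zero.mpr hb0,
              fun h => hbn (by linear_combination -h), rfl⟩))⟩
    · by_cases han : a = -1
      · subst han
        by_cases hb0 : b = 0
        · subst hb0
          exact ⟨(-1, 0), Or.inl rfl, Or.inr (Or.inr (Or.inr (Or.inr (Or.inl rfl))))⟩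
        · by_cases hb1 : b = 1
          · subst hb1
            exact ⟨(1, 0), Or.inr (by
                rw [pi_Npartner h3 h5 neg_one_ne_zero' (neg_one_ne_one h3), neg_neg]),
              Or.inr (Or.inr (Or.inr (Or.inl
                ⟨1, one_ne_zero', fun h => neg_one_ne_one h3 h.symm, rfl⟩)))⟩
          · by_cases hbn : b = -1
            · subst hbn
              exact ⟨(0, 1), Or.inr (pi_ZPartner h3 h5).symm, Or.inr (Or.inl rfl)⟩
            · exact ⟨(-1, b), Or.inl rfl,
                Or.inr (Or.inr (Or.inr (Or.inr (Or.inr (Or.inl ⟨b, hb0, hb1, hbn, rfl⟩)))))⟩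
      · by_cases hb0 : b = 0
        · subst hb0
          exact ⟨(a, 0), Or.inl rfl,
            Or.inr (Or.inr (Or.inr (Or.inl ⟨a, ha0, han, rfl⟩)))⟩
        · by_cases hb1 : b = 1
          · subst hb1
            exact ⟨(-a, 0), Or.inr (pi_Npartner h3 h5 ha0 ha1).symm,
              Or.inr (Or.inr (Or.inr (Or.inl ⟨-a, neg_ne_zero.mpr ha0,
                fun h => ha1 (by linear_combination -h), rfl⟩)))⟩
          · by_cases hav : 2 * a.val < p
            · exact ⟨(a, b), Or.inl rfl,
                Or.inr (Or.inr (Or.inr (Or.inr (Or.inr (Or.inr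
                  ⟨a, b, ha0, ha1, han, hav, hb0, hb1, rfl⟩)))))⟩
            · exact ⟨(-a, tau' b), Or.inr (pi_K' ha0 ha1 han hav hb0 hb1).symm,
                Or.inr (Or.inr (Or.inr (Or.inr (Or.inr (Or.inr
                  ⟨-a, tau' b, neg_ne_zero.mpr ha0, fun h => han (by linear_combination -h),
                   fun h => ha1 (by linear_combination -h), val_half_neg h3 ha0 hav,
                   tau'_ne_zero hb1, tau'_ne_one h5, rfl⟩)))))⟩

end Canon
end Stmt2Aux

namespace Stmt2Aux
section Edge
variable {p q : ℕ} [Fact p.Prime] [Fact q.Prime]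

def EDGE (u v : ZMod p × ZMod q) : Prop :=
  ∃ x y : ZMod p × ZMod q, (x = u ∨ x = pi p q u) ∧ (y = v ∨ y = pi p q v) ∧ IsUnit (x + y)

lemma edge_mk {u v : ZMod p × ZMod q} (x1 : ZMod p) (x2 : ZMod q) (y1 : ZMod p) (y2 : ZMod q)
    (hx : (x1, x2) = u ∨ (x1, x2) = pi p q u) (hy : (y1, y2) = v ∨ (y1, y2) = pi p q v)
    (h1 : x1 + y1 ≠ 0) (h2 : x2 + y2 ≠ 0) : EDGE u v :=
  ⟨(x1, x2), (y1, y2), hx, hy, isUnit_pair (isUnit_iff_ne_zero.mpr h1) (isUnit_iff_ne_zero.mpr h2)⟩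

end Edge
end Stmt2Aux

namespace Stmt2Aux
section Comp
variable {p q : ℕ} [Fact p.Prime] [Fact q.Prime]
variable (h3 : 3 ≤ p) (h5 : 5 ≤ q)
include h3 h5

lemma comp' {u v : ZMod p × ZMod q} (hu : Canon p q u) (hv : Canon p q v)
    (hvu : v ≠ u) (hvpu : v ≠ pi p q u) : EDGE u v := by
  have h3q : 3 ≤ q := by omega
  rcases hu with rfl | rfl | ⟨b1, hb10, hb11, rfl⟩ | ⟨a1, ha10, ha1n, rfl⟩ | rfl |
    ⟨b1, hb10, hb11, hb1n, rfl⟩ | ⟨a1, b1, ha10, ha11, ha1n, h1v, hb10, hb11, rfl⟩ <;>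
  rcases hv with rfl | rfl | ⟨b2, hb20, hb21, rfl⟩ | ⟨a2, ha20, ha2n, rfl⟩ | rfl |
    ⟨b2, hb20, hb21, hb2n, rfl⟩ | ⟨a2, b2, ha20, ha21, ha2n, h2v, hb20, hb21, rfl⟩
  -- (1,1) S S
  · exact absurd rfl hvu
  -- (1,2) S Z
  · exact edge_mk 0 0 (-1) (-1) (Or.inl rfl) (Or.inr (pi_01 h5).symm)
      (fun hc => neg_one_ne_zero' (by linear_combination hc))
      (fun hc => neg_one_ne_zero' (by linear_combination hc))
  -- (1,3) S M
  · exact edge_mk 0 0 1 (-b2) (Or.inl rfl) (Or.inr (pi_0b hb20 hb21).symm)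
      (fun hc => one_ne_zero' (by linear_combination hc))
      (fun hc => hb20 (by linear_combination -hc))
  -- (1,4) S N
  · exact edge_mk 0 0 (-a2) 1 (Or.inl rfl) (Or.inr (pi_N h3 ha20 ha2n).symm)
      (fun hc => ha20 (by linear_combination -hc))
      (fun hc => one_ne_zero' (by linear_combination hc))
  -- (1,5) S N'
  · exact edge_mk 0 0 1 (-1) (Or.inl rfl) (Or.inr (pi_Nx h3).symm)
      (fun hc => one_ne_zero' (by linear_combination hc))
      (fun hc => neg_one_ne_zero' (by linear_combination hc))
  -- (1,6) S W
  · exact edge_mk 0 0 (-1) b2 (Or.inl rfl) (Or.inl rfl)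
      (fun hc => neg_one_ne_zero' (by linear_combination hc))
      (fun hc => hb20 (by linear_combination hc))
  -- (1,7) S K
  · exact edge_mk 0 0 a2 b2 (Or.inl rfl) (Or.inl rfl)
      (fun hc => ha20 (by linear_combination hc))
      (fun hc => hb20 (by linear_combination hc))
  -- (2,1) Z S
  · exact edge_mk (-1) (-1) 0 0 (Or.inr (pi_01 h5).symm) (Or.inl rfl)
      (fun hc => neg_one_ne_zero' (by linear_combination hc))
      (fun hc => neg_one_ne_zero' (by linear_combination hc))
  -- (2,2) Z Z
  · exact absurd rfl hvu
  -- (2,3) Z M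
  · exact edge_mk 0 1 1 (-b2) (Or.inl rfl) (Or.inr (pi_0b hb20 hb21).symm)
      (fun hc => one_ne_zero' (by linear_combination hc))
      (fun hc => hb21 (by linear_combination -hc))
  -- (2,4) Z N
  · exact edge_mk 0 1 a2 0 (Or.inl rfl) (Or.inl rfl)
      (fun hc => ha20 (by linear_combination hc))
      (fun hc => one_ne_zero' (by linear_combination hc))
  -- (2,5) Z N'
  · exact edge_mk 0 1 (-1) 0 (Or.inl rfl) (Or.inl rfl)
      (fun hc => neg_one_ne_zero' (by linear_combination hc))
      (fun hc => one_ne_zero' (by linear_combination hc))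
  -- (2,6) Z W
  · exact edge_mk (-1) (-1) (-1) b2 (Or.inr (pi_01 h5).symm) (Or.inl rfl)
      (fun hc => neg_two_ne_zero h3 (by linear_combination hc))
      (fun hc => hb21 (by linear_combination hc))
  -- (2,7) Z K
  · exact edge_mk (-1) (-1) a2 b2 (Or.inr (pi_01 h5).symm) (Or.inl rfl)
      (fun hc => ha21 (by linear_combination hc))
      (fun hc => hb21 (by linear_combination hc))
  -- (3,1) M S
  · exact edge_mk 1 (-b1) 0 0 (Or.inr (pi_0b hb10 hb11).symm) (Or.inl rfl)
      (fun hc => one_ne_zero' (by linear_combination hc))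
      (fun hc => hb10 (by linear_combination -hc))
  -- (3,2) M Z
  · exact edge_mk 1 (-b1) 0 1 (Or.inr (pi_0b hb10 hb11).symm) (Or.inl rfl)
      (fun hc => one_ne_zero' (by linear_combination hc))
      (fun hc => hb11 (by linear_combination -hc))
  -- (3,3) M M
  · have hne : b2 ≠ b1 := fun h => hvu (by rw [h])
    exact edge_mk 0 b1 1 (-b2) (Or.inl rfl) (Or.inr (pi_0b hb20 hb21).symm)
      (fun hc => one_ne_zero' (by linear_combination hc))
      (fun hc => hne (by linear_combination -hc))
  -- (3,4) M N
  · exact edge_mk 0 b1 a2 0 (Or.inl rfl) (Or.inl rfl)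
      (fun hc => ha20 (by linear_combination hc))
      (fun hc => hb10 (by linear_combination hc))
  -- (3,5) M N'
  · exact edge_mk 0 b1 (-1) 0 (Or.inl rfl) (Or.inl rfl)
      (fun hc => neg_one_ne_zero' (by linear_combination hc))
      (fun hc => hb10 (by linear_combination hc))
  -- (3,6) M W
  · by_cases hs : b1 + b2 = 0
    · exact edge_mk 0 b1 (-1) (-b2) (Or.inl rfl) (Or.inr (pi_W h3 h5 hb20 hb21 hb2n).symm)
        (fun hc => neg_one_ne_zero' (by linear_combination hc))
        (fun hc => two_mul_ne_zero h3q hb10 (by linear_combination hs + hc))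
    · exact edge_mk 0 b1 (-1) b2 (Or.inl rfl) (Or.inl rfl)
        (fun hc => neg_one_ne_zero' (by linear_combination hc)) hs
  -- (3,7) M K
  · by_cases hs : b1 + b2 = 0
    · exact edge_mk 1 (-b1) a2 b2 (Or.inr (pi_0b hb10 hb11).symm) (Or.inl rfl)
        (fun hc => ha2n (by linear_combination hc))
        (fun hc => two_mul_ne_zero h3q hb20 (by linear_combination hs + hc))
    · exact edge_mk 0 b1 a2 b2 (Or.inl rfl) (Or.inl rfl)
        (fun hc => ha20 (by linear_combination hc)) hs
  -- (4,1) N S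
  · exact edge_mk (-a1) 1 0 0 (Or.inr (pi_N h3 ha10 ha1n).symm) (Or.inl rfl)
      (fun hc => ha10 (by linear_combination -hc))
      (fun hc => one_ne_zero' (by linear_combination hc))
  -- (4,2) N Z
  · exact edge_mk a1 0 0 1 (Or.inl rfl) (Or.inl rfl)
      (fun hc => ha10 (by linear_combination hc))
      (fun hc => one_ne_zero' (by linear_combination hc))
  -- (4,3) N M
  · exact edge_mk a1 0 0 b2 (Or.inl rfl) (Or.inl rfl)
      (fun hc => ha10 (by linear_combination hc))
      (fun hc => hb20 (by linear_combination hc))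
  -- (4,4) N N
  · have hne : a2 ≠ a1 := fun h => hvu (by rw [h])
    exact edge_mk a1 0 (-a2) 1 (Or.inl rfl) (Or.inr (pi_N h3 ha20 ha2n).symm)
      (fun hc => hne (by linear_combination -hc))
      (fun hc => one_ne_zero' (by linear_combination hc))
  -- (4,5) N N'
  · exact edge_mk a1 0 1 (-1) (Or.inl rfl) (Or.inr (pi_Nx h3).symm)
      (fun hc => ha1n (by linear_combination hc))
      (fun hc => neg_one_ne_zero' (by linear_combination hc))
  -- (4,6) N W
  · by_cases hc1 : a1 = 1
    · exact edge_mk (-a1) 1 (-1) b2 (Or.inr (pi_N h3 ha10 ha1n).symm) (Or.inl rfl)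
        (fun hc => neg_two_ne_zero h3 (by rw [hc1] at hc; linear_combination hc))
        (fun hc => hb2n (by linear_combination hc))
    · exact edge_mk a1 0 (-1) b2 (Or.inl rfl) (Or.inl rfl)
        (fun hc => hc1 (by linear_combination hc))
        (fun hc => hb20 (by linear_combination hc))
  -- (4,7) N K
  · by_cases hs : a1 + a2 = 0
    · exact edge_mk a1 0 (-a2) (tau b2) (Or.inl rfl)
        (Or.inr (pi_K ha20 ha21 ha2n h2v hb20 hb21).symm)
        (fun hc => two_mul_ne_zero h3 ha10 (by linear_combination hs + hc))
        (fun hc => tau_ne_zero h5 hb20 (by linear_combination hc))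
    · exact edge_mk a1 0 a2 b2 (Or.inl rfl) (Or.inl rfl) hs
        (fun hc => hb20 (by linear_combination hc))
  -- (5,1) N' S
  · exact edge_mk 1 (-1) 0 0 (Or.inr (pi_Nx h3).symm) (Or.inl rfl)
      (fun hc => one_ne_zero' (by linear_combination hc))
      (fun hc => neg_one_ne_zero' (by linear_combination hc))
  -- (5,2) N' Z
  · exact edge_mk (-1) 0 0 1 (Or.inl rfl) (Or.inl rfl)
      (fun hc => neg_one_ne_zero' (by linear_combination hc))
      (fun hc => one_ne_zero' (by linear_combination hc))
  -- (5,3) N' M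
  · exact edge_mk (-1) 0 0 b2 (Or.inl rfl) (Or.inl rfl)
      (fun hc => neg_one_ne_zero' (by linear_combination hc))
      (fun hc => hb20 (by linear_combination hc))
  -- (5,4) N' N
  · exact edge_mk 1 (-1) a2 0 (Or.inr (pi_Nx h3).symm) (Or.inl rfl)
      (fun hc => ha2n (by linear_combination hc))
      (fun hc => neg_one_ne_zero' (by linear_combination hc))
  -- (5,5) N' N'
  · exact absurd rfl hvu
  -- (5,6) N' W
  · exact edge_mk (-1) 0 (-1) b2 (Or.inl rfl) (Or.inl rfl)
      (fun hc => neg_two_ne_zero h3 (by linear_combination hc))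
      (fun hc => hb20 (by linear_combination hc))
  -- (5,7) N' K
  · exact edge_mk 1 (-1) a2 b2 (Or.inr (pi_Nx h3).symm) (Or.inl rfl)
      (fun hc => ha2n (by linear_combination hc))
      (fun hc => hb21 (by linear_combination hc))
  -- (6,1) W S
  · exact edge_mk (-1) b1 0 0 (Or.inl rfl) (Or.inl rfl)
      (fun hc => neg_one_ne_zero' (by linear_combination hc))
      (fun hc => hb10 (by linear_combination hc))
  -- (6,2) W Z
  · exact edge_mk (-1) (-b1) 0 1 (Or.inr (pi_W h3 h5 hb10 hb11 hb1n).symm) (Or.inl rfl)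
      (fun hc => neg_one_ne_zero' (by linear_combination hc))
      (fun hc => hb11 (by linear_combination -hc))
  -- (6,3) W M
  · by_cases hs : b1 + b2 = 0
    · exact edge_mk (-1) (-b1) 0 b2 (Or.inr (pi_W h3 h5 hb10 hb11 hb1n).symm) (Or.inl rfl)
        (fun hc => neg_one_ne_zero' (by linear_combination hc))
        (fun hc => two_mul_ne_zero h3q hb20 (by linear_combination hs + hc))
    · exact edge_mk (-1) b1 0 b2 (Or.inl rfl) (Or.inl rfl)
        (fun hc => neg_one_ne_zero' (by linear_combination hc)) hs
  -- (6,4) W N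
  · by_cases hc1 : a2 = 1
    · exact edge_mk (-1) (-b1) (-a2) 1 (Or.inr (pi_W h3 h5 hb10 hb11 hb1n).symm)
        (Or.inr (pi_N h3 ha20 ha2n).symm)
        (fun hc => neg_two_ne_zero h3 (by rw [hc1] at hc; linear_combination hc))
        (fun hc => hb11 (by linear_combination -hc))
    · exact edge_mk (-1) b1 a2 0 (Or.inl rfl) (Or.inl rfl)
        (fun hc => hc1 (by linear_combination hc))
        (fun hc => hb10 (by linear_combination hc))
  -- (6,5) W N'
  · exact edge_mk (-1) b1 (-1) 0 (Or.inl rfl) (Or.inl rfl)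
      (fun hc => neg_two_ne_zero h3 (by linear_combination hc))
      (fun hc => hb10 (by linear_combination hc))
  -- (6,6) W W
  · have hne2 : b2 ≠ -b1 := fun h => hvpu (by rw [pi_W h3 h5 hb10 hb11 hb1n, h])
    exact edge_mk (-1) b1 (-1) b2 (Or.inl rfl) (Or.inl rfl)
      (fun hc => neg_two_ne_zero h3 (by linear_combination hc))
      (fun hc => hne2 (by linear_combination hc))
  -- (6,7) W K
  · rcases not_both_zero h3q hb10 (b := b2) with hs | hs
    · exact edge_mk (-1) b1 a2 b2 (Or.inl rfl) (Or.inl rfl)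
        (fun hc => ha21 (by linear_combination hc)) hs
    · exact edge_mk (-1) (-b1) a2 b2 (Or.inr (pi_W h3 h5 hb10 hb11 hb1n).symm) (Or.inl rfl)
        (fun hc => ha21 (by linear_combination hc))
        (fun hc => hs (by linear_combination -hc))
  -- (7,1) K S
  · exact edge_mk a1 b1 0 0 (Or.inl rfl) (Or.inl rfl)
      (fun hc => ha10 (by linear_combination hc))
      (fun hc => hb10 (by linear_combination hc))
  -- (7,2) K Z
  · exact edge_mk a1 b1 (-1) (-1) (Or.inl rfl) (Or.inr (pi_01 h5).symm)
      (fun hc => ha11 (by linear_combination hc))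
      (fun hc => hb11 (by linear_combination hc))
  -- (7,3) K M
  · by_cases hs : b1 + b2 = 0
    · exact edge_mk a1 b1 1 (-b2) (Or.inl rfl) (Or.inr (pi_0b hb20 hb21).symm)
        (fun hc => ha1n (by linear_combination hc))
        (fun hc => two_mul_ne_zero h3q hb10 (by linear_combination hs + hc))
    · exact edge_mk a1 b1 0 b2 (Or.inl rfl) (Or.inl rfl)
        (fun hc => ha10 (by linear_combination hc)) hs
  -- (7,4) K N
  · by_cases hs : a1 + a2 = 0
    · exact edge_mk (-a1) (tau b1) a2 0
        (Or.inr (pi_K ha10 ha11 ha1n h1v hb10 hb11).symm) (Or.inl rfl)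
        (fun hc => two_mul_ne_zero h3 ha20 (by linear_combination hs + hc))
        (fun hc => tau_ne_zero h5 hb10 (by linear_combination hc))
    · exact edge_mk a1 b1 a2 0 (Or.inl rfl) (Or.inl rfl) hs
        (fun hc => hb10 (by linear_combination hc))
  -- (7,5) K N'
  · exact edge_mk a1 b1 1 (-1) (Or.inl rfl) (Or.inr (pi_Nx h3).symm)
      (fun hc => ha1n (by linear_combination hc))
      (fun hc => hb11 (by linear_combination hc))
  -- (7,6) K W
  · rcases not_both_zero h3q hb10 (b := b2) with hs | hs
    · exact edge_mk a1 b1 (-1) b2 (Or.inl rfl) (Or.inl rfl)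
        (fun hc => ha11 (by linear_combination hc)) hs
    · exact edge_mk a1 b1 (-1) (-b2) (Or.inl rfl) (Or.inr (pi_W h3 h5 hb20 hb21 hb2n).symm)
        (fun hc => ha11 (by linear_combination hc))
        (fun hc => hs (by linear_combination hc))
  -- (7,7) K K
  · by_cases hac : a2 = a1
    · subst hac
      by_cases hs : b1 + b2 = 0
      · exact edge_mk (-a2) (tau b1) (-a2) (tau b2)
          (Or.inr (pi_K ha10 ha11 ha1n h1v hb10 hb11).symm)
          (Or.inr (pi_K ha20 ha21 ha2n h2v hb20 hb21).symm)
          (fun hc => two_mul_ne_zero h3 ha10 (by linear_combination -hc))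
          (fun hc => two_ne_zero' h3q ((tau_add_tau h5 hb11 hb21 hs).symm.trans hc))
      · exact edge_mk a2 b1 a2 b2 (Or.inl rfl) (Or.inl rfl)
          (fun hc => two_mul_ne_zero h3 ha10 hc) hs
    · have hanc : a1 + a2 ≠ 0 := fun h =>
        half_ne_neg h3 ha10 h1v h2v (by linear_combination h)
      by_cases hs : b1 + b2 = 0
      · exact edge_mk (-a1) (tau b1) (-a2) (tau b2)
          (Or.inr (pi_K ha10 ha11 ha1n h1v hb10 hb11).symm)
          (Or.inr (pi_K ha20 ha21 ha2n h2v hb20 hb21).symm)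
          (fun hc => hanc (by linear_combination -hc))
          (fun hc => two_ne_zero' h3q ((tau_add_tau h5 hb11 hb21 hs).symm.trans hc))
      · exact edge_mk a1 b1 a2 b2 (Or.inl rfl) (Or.inl rfl) hanc hs

end Comp
end Stmt2Aux

namespace Stmt2Aux
section Rep
variable {p q : ℕ} [Fact p.Prime] [Fact q.Prime]

def enc (v : ZMod p × ZMod q) : ℕ := v.1.val * q + v.2.val

lemma enc_inj {u v : ZMod p × ZMod q} (h : enc u = enc v) : u = v := by
  unfold enc at h
  have h1 : u.2.val < q := ZMod.val_lt _
  have h2 : v.2.val < q := ZMod.val_lt _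
  have e2 : u.2.val = v.2.val := by
    have hm := congrArg (· % q) h
    change (u.1.val * q + u.2.val) % q = (v.1.val * q + v.2.val) % q at hm
    rw [Nat.mul_comm u.1.val q, Nat.mul_comm v.1.val q] at hm
    rw [Nat.mul_add_mod, Nat.mul_add_mod, Nat.mod_eq_of_lt h1, Nat.mod_eq_of_lt h2] at hm
    exact hm
  have e1 : u.1.val = v.1.val := by
    have hq : 0 < q := Nat.pos_of_ne_zero (NeZero.ne q)
    have : u.1.val * q = v.1.val * q := by omega
    exact Nat.eq_of_mul_eq_mul_right hq this
  exact Prod.ext (ZMod.val_injective p e1) (ZMod.val_injective q e2)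

def rep (p q : ℕ) [Fact p.Prime] [Fact q.Prime] (v : ZMod p × ZMod q) : ZMod p × ZMod q :=
  if enc v ≤ enc (pi p q v) then v else pi p q v

variable (h3 : 3 ≤ p) (h5 : 5 ≤ q)

lemma rep_eq_or (v : ZMod p × ZMod q) : rep p q v = v ∨ rep p q v = pi p q v := by
  unfold rep; split_ifs <;> simp

include h3 h5

lemma rep_pi (v : ZMod p × ZMod q) : rep p q (pi p q v) = rep p q v := by
  unfold rep
  rw [pi_invol h3 h5]
  by_cases h1 : enc v ≤ enc (pi p q v) <;> by_cases h2 : enc (pi p q v) ≤ enc v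
  · have : pi p q v = v := enc_inj (le_antisymm h2 h1)
    rw [if_pos h2, if_pos h1, this]
  · rw [if_neg h2, if_pos h1]
  · rw [if_pos h2, if_neg h1]
  · omega

lemma rep_idem (v : ZMod p × ZMod q) : rep p q (rep p q v) = rep p q v := by
  rcases rep_eq_or v with h | h
  · rw [h, h]
  · rw [h, rep_pi h3 h5, ← h]

lemma rep_of_mem {x u : ZMod p × ZMod q} (h : x = u ∨ x = pi p q u) :
    rep p q x = rep p q u := by
  rcases h with rfl | rfl
  · rfl
  · exact rep_pi h3 h5 u

lemma rep_mem {x u : ZMod p × ZMod q} (h : rep p q x = rep p q u) :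
    x = u ∨ x = pi p q u := by
  rcases rep_eq_or (p := p) (q := q) x with h1 | h1 <;>
    rcases rep_eq_or (p := p) (q := q) u with h2 | h2
  · left; rw [← h1, h, h2]
  · right; rw [← h1, h, h2]
  · right
    have hxu : pi p q x = u := by rw [← h1, h, h2]
    have := congrArg (pi p q) hxu
    rwa [pi_invol h3 h5] at this
  · left
    have hxu : pi p q x = pi p q u := by rw [← h1, h, h2]
    have := congrArg (pi p q) hxu
    rwa [pi_invol h3 h5, pi_invol h3 h5] at this

lemma rep_00 : rep p q (0, 0) = (0, 0) := by
  unfold rep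
  rw [pi_00, if_pos le_rfl]

lemma card_fix :
    2 * (Finset.univ.filter (fun v : ZMod p × ZMod q => rep p q v = v)).card = p * q + 1 := by
  classical
  set A := Finset.univ.filter (fun v : ZMod p × ZMod q => rep p q v = v) with hA
  set B := Finset.univ.filter (fun v : ZMod p × ZMod q => ¬ rep p q v = v) with hB
  have h00 : (0, 0) ∈ A := by
    simp only [hA, Finset.mem_filter, Finset.mem_univ, true_and]
    exact rep_00 h3 h5
  have hbij : (A.erase (0, 0)).card = B.card := by
    apply Finset.card_bij (fun a _ => pi p q a)
    · intro a ha
      rw [Finset.mem_erase] at ha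
      obtain ⟨hne, ha⟩ := ha
      simp only [hA, Finset.mem_filter, Finset.mem_univ, true_and] at ha
      simp only [hB, Finset.mem_filter, Finset.mem_univ, true_and]
      rw [rep_pi h3 h5, ha]
      intro h
      exact hne (pi_fix h3 h5 h.symm)
    · intro a ha b hb h
      have := congrArg (pi p q) h
      rwa [pi_invol h3 h5, pi_invol h3 h5] at this
    · intro w hw
      simp only [hB, Finset.mem_filter, Finset.mem_univ, true_and] at hw
      refine ⟨pi p q w, ?_, pi_invol h3 h5 w⟩
      rw [Finset.mem_erase]
      constructor
      · intro h
        have : w = (0, 0) := by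
          have := congrArg (pi p q) h
          rwa [pi_invol h3 h5, pi_00] at this
        exact hw (this ▸ rep_00 h3 h5)
      · simp only [hA, Finset.mem_filter, Finset.mem_univ, true_and]
        rw [rep_pi h3 h5]
        rcases rep_eq_or (p := p) (q := q) w with h | h
        · exact absurd h hw
        · exact h
  have hsplit : A.card + B.card = p * q := by
    rw [hA, hB]
    rw [Finset.card_filter_add_card_filter_not]
    rw [Finset.card_univ, Fintype.card_prod, ZMod.card, ZMod.card]
  have herase : (A.erase (0, 0)).card = A.card - 1 := Finset.card_erase_of_mem h00
  have hpos : 1 ≤ A.card := Finset.card_pos.mpr ⟨_, h00⟩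
  omega

end Rep
end Stmt2Aux

open Stmt2Aux in
theorem stmt_2 (p q : ℕ) (hp : p.Prime) (hq : q.Prime) (h3 : 3 ≤ p) (hpq : p < q) :
    (p * q + 1) / 2 ≤ achromaticNumber (unitaryCayley (ZMod (p * q))) := by
  classical
  haveI : Fact p.Prime := ⟨hp⟩
  haveI : Fact q.Prime := ⟨hq⟩
  have h5 : 5 ≤ q := by
    rcases Nat.lt_or_ge q 5 with h | h
    · have : q = 4 := by omega
      subst this
      exact absurd hq (by decide)
    · exact h
  haveI : NeZero (p * q) := ⟨Nat.mul_ne_zero (by omega) (by omega)⟩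
  set m := (p * q + 1) / 2 with hm
  have hco : Nat.Coprime p q := (Nat.coprime_primes hp hq).mpr (Nat.ne_of_lt hpq)
  set e := ZMod.chineseRemainder hco with he
  set A : Finset (ZMod p × ZMod q) := Finset.univ.filter (fun v => rep p q v = v) with hA
  have memA : ∀ v : ZMod p × ZMod q, rep p q v ∈ A := fun v => by
    simp only [hA, Finset.mem_filter, Finset.mem_univ, true_and]
    exact rep_idem h3 h5 v
  have repA : ∀ w : ZMod p × ZMod q, w ∈ A → rep p q w = w := fun w hw => by
    simpa only [hA, Finset.mem_filter, Finset.mem_univ, true_and] using hw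
  have hcardA : Fintype.card {x // x ∈ A} = m := by
    rw [Fintype.card_coe]
    have := card_fix (p := p) (q := q) h3 h5
    rw [← hA] at this
    omega
  set E := Fintype.equivFinOfCardEq hcardA with hE
  set col : ZMod (p * q) → Fin m := fun x => E ⟨rep p q (e x), memA _⟩ with hcol
  have valid : ∀ {x y : ZMod (p * q)}, (unitaryCayley (ZMod (p * q))).Adj x y →
      col x ≠ col y := by
    intro x y hadj hc
    obtain ⟨hne, hunit⟩ := hadj
    have h1 : rep p q (e x) = rep p q (e y) := by
      have := E.injective hc
      exact Subtype.ext_iff.mp this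
    rcases rep_mem h3 h5 h1 with h2 | h2
    · exact hne (e.injective h2)
    · have h4 : IsUnit (e x + e y) := by
        have := hunit.map e
        rwa [map_add] at this
      rw [h2] at h4
      rcases pi_sum h3 h5 (e y) with h6 | h6
      · have h7 : IsUnit ((e y).1 + (pi p q (e y)).1) := by
          have := h4.map (RingHom.fst (ZMod p) (ZMod q))
          simpa [add_comm] using this
        rw [h6] at h7
        exact isUnit_iff_ne_zero.mp h7 rfl
      · have h7 : IsUnit ((e y).2 + (pi p q (e y)).2) := by
          have := h4.map (RingHom.snd (ZMod p) (ZMod q))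
          simpa [add_comm] using this
        rw [h6] at h7
        exact isUnit_iff_ne_zero.mp h7 rfl
  have hmem : m ∈ {n | ∃ C : (unitaryCayley (ZMod (p * q))).Coloring (Fin n),
      IsCompleteColoring (unitaryCayley (ZMod (p * q))) C} := by
    refine ⟨SimpleGraph.Coloring.mk col valid, ?_, ?_⟩
    · -- surjective
      intro c
      refine ⟨e.symm ↑(E.symm c), ?_⟩
      show col (e.symm ↑(E.symm c)) = c
      rw [hcol]
      simp only [RingEquiv.apply_symm_apply]
      have : (⟨rep p q ↑(E.symm c), memA _⟩ : {x // x ∈ A}) = E.symm c :=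
        Subtype.ext (repA _ (E.symm c).2)
      rw [this, Equiv.apply_symm_apply]
    · -- complete
      intro c1 c2 hc12
      set u : ZMod p × ZMod q := ↑(E.symm c1) with hu
      set v : ZMod p × ZMod q := ↑(E.symm c2) with hv
      have hru : rep p q u = u := repA _ (E.symm c1).2
      have hrv : rep p q v = v := repA _ (E.symm c2).2
      have huv : u ≠ v := by
        intro h
        have h2 := congrArg E (Subtype.ext h : E.symm c1 = E.symm c2)
        rw [Equiv.apply_symm_apply, Equiv.apply_symm_apply] at h2
        exact hc12 h2
      obtain ⟨u', hu'm, hu'c⟩ := norm h3 h5 u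
      obtain ⟨v', hv'm, hv'c⟩ := norm h3 h5 v
      have hru' : rep p q u' = u := by rw [rep_of_mem h3 h5 hu'm, hru]
      have hrv' : rep p q v' = v := by rw [rep_of_mem h3 h5 hv'm, hrv]
      have hvu' : v' ≠ u' := by
        intro h
        exact huv (by rw [← hru', ← hrv', h])
      have hvpu' : v' ≠ pi p q u' := by
        intro h
        apply huv
        rw [← hru', ← hrv', h, rep_pi h3 h5]
      obtain ⟨x, y, hx, hy, hunit⟩ := comp' h3 h5 hu'c hv'c hvu' hvpu'
      have hrx : rep p q x = u := by rw [rep_of_mem h3 h5 hx, hru']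
      have hry : rep p q y = v := by rw [rep_of_mem h3 h5 hy, hrv']
      have hxy : x ≠ y := fun h => huv (by rw [← hrx, ← hry, h])
      refine ⟨e.symm x, e.symm y, ⟨?_, ?_⟩, ?_, ?_⟩
      · intro h
        exact hxy (by
          have := congrArg e h
          rwa [RingEquiv.apply_symm_apply, RingEquiv.apply_symm_apply] at this)
      · have := hunit.map e.symm
        rwa [map_add] at this
      · show col (e.symm x) = c1
        rw [hcol]
        simp only [RingEquiv.apply_symm_apply]
        have : (⟨rep p q x, memA _⟩ : {x // x ∈ A}) = E.symm c1 := Subtype.ext hrx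
        rw [this, Equiv.apply_symm_apply]
      · show col (e.symm y) = c2
        rw [hcol]
        simp only [RingEquiv.apply_symm_apply]
        have : (⟨rep p q y, memA _⟩ : {x // x ∈ A}) = E.symm c2 := Subtype.ext hry
        rw [this, Equiv.apply_symm_apply]
  have hbdd : BddAbove {n | ∃ C : (unitaryCayley (ZMod (p * q))).Coloring (Fin n),
      IsCompleteColoring (unitaryCayley (ZMod (p * q))) C} := by
    refine ⟨p * q, fun n hn => ?_⟩
    obtain ⟨C, hsurj, _⟩ := hn
    have := Fintype.card_le_of_surjective (C : ZMod (p * q) → Fin n) hsurj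
    rwa [Fintype.card_fin, ZMod.card] at this
  exact le_csSup hbdd hmem
end

section
/- If q > 3 is a prime, then the achromatic number of the unitary addition Cayley graph U(ℤ_{3q}) equals (3q + 1)/2. -/
set_option linter.unusedSectionVars false
set_option maxHeartbeats 1000000


def Gp (q : ℕ) : SimpleGraph (ZMod 3 × ZMod q) where
  Adj u v := u ≠ v ∧ u.1 + v.1 ≠ 0 ∧ u.2 + v.2 ≠ 0
  symm := ⟨by rintro u v ⟨h1, h2, h3⟩; exact ⟨h1.symm, by rwa [add_comm], by rwa [add_comm]⟩⟩
  loopless := ⟨fun u ⟨h, _⟩ => h rfl⟩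

section ValLemmas
variable {q : ℕ} [NeZero q]
lemma vself (b : ZMod q) : ((b.val : ℕ) : ZMod q) = b := by
  rw [ZMod.natCast_val, ZMod.cast_id]
lemma ne_of_val_ne {a b : ZMod q} (h : a.val ≠ b.val) : a ≠ b := fun hh => h (by rw [hh])
lemma cne0 {m : ℕ} (h0 : m ≠ 0) (h1 : m < q) : (m : ZMod q) ≠ 0 := by
  apply ne_of_val_ne; rw [ZMod.val_cast_of_lt h1, ZMod.val_zero]; exact h0
lemma val_neg_nat {m : ℕ} (h0 : m ≠ 0) (h1 : m < q) : (-(m : ZMod q)).val = q - m := by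
  rw [ZMod.neg_val, if_neg (cne0 h0 h1), ZMod.val_cast_of_lt h1]
lemma neg_nat_cast {m : ℕ} (h1 : m ≤ q) : ((q - m : ℕ) : ZMod q) = -(m : ZMod q) := by
  rw [Nat.cast_sub h1, ZMod.natCast_self, zero_sub]
lemma add_eq_zero_vals {a b : ZMod q} : a + b = 0 ↔ (a.val + b.val = 0 ∨ a.val + b.val = q) := by
  have hab : a + b = ((a.val + b.val : ℕ) : ZMod q) := by rw [Nat.cast_add, vself, vself]
  rw [hab, ZMod.natCast_eq_zero_iff]
  constructor
  · rintro ⟨c, hc⟩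
    have h1 := ZMod.val_lt a; have h2 := ZMod.val_lt b
    have hq := Nat.pos_of_ne_zero (NeZero.ne q)
    have : c ≤ 1 := by nlinarith
    interval_cases c <;> omega
  · rintro (h | h) <;> simp [h]
lemma add_ne_zero_vals {a b : ZMod q} (h0 : a.val + b.val ≠ 0) (hq : a.val + b.val ≠ q) :
    a + b ≠ 0 := fun h => by rcases add_eq_zero_vals.mp h with h' | h' <;> omega
end ValLemmas

lemma pne1 {q : ℕ} {a c : ZMod 3} {b d : ZMod q} (h : a ≠ c) : (a, b) ≠ (c, d) :=
  fun hh => h (congrArg Prod.fst hh)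
lemma pne2 {q : ℕ} {a c : ZMod 3} {b d : ZMod q} (h : b ≠ d) : (a, b) ≠ (c, d) :=
  fun hh => h (congrArg Prod.snd hh)

def kcol (q : ℕ) : ℕ := (3 * q + 1) / 2

lemma gp_adj {q : ℕ} {u v : ZMod 3 × ZMod q} :
    (Gp q).Adj u v ↔ u ≠ v ∧ u.1 + v.1 ≠ 0 ∧ u.2 + v.2 ≠ 0 := Iff.rfl

lemma z3add {a b : ZMod 3} (ha : a ≠ 0) (hb : b ≠ 0) (hab : a ≠ b) : a + b = 0 := by
  revert a b; decide
def yfun (q x : ℕ) : ℕ := if x = 0 then (q - 1) / 2 else if x = (q - 1) / 2 then 0 else x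
def fone (q i : ℕ) : ZMod 3 × ZMod q :=
  if i = 0 then (0, 0) else if i < q then (0, (i : ZMod q)) else (1, ((i - q : ℕ) : ZMod q))
def ftwo (q i : ℕ) : ZMod 3 × ZMod q :=
  if i = 0 then (0, 0)
  else if i ≤ (q - 1) / 2 then (1, -(i : ZMod q))
  else if i < q then (2, -(i : ZMod q))
  else (2, -((yfun q (i - q) : ℕ) : ZMod q))
def Lfun (q : ℕ) (v : ZMod 3 × ZMod q) : ℕ :=
  if v.1 = 0 then v.2.val
  else if v.1 = 1 then (if v.2.val ≤ (q - 1) / 2 then q + v.2.val else q - v.2.val)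
  else
    if v.2.val = 0 then q + (q - 1) / 2
    else if v.2.val ≤ (q - 1) / 2 then q - v.2.val
    else if v.2.val = (q - 1) / 2 + 1 then q
    else q + (q - v.2.val)

section Con
variable {q : ℕ} [NeZero q] (hodd : q % 2 = 1) (hq5 : 5 ≤ q)
include hodd hq5

lemma L_lt (v : ZMod 3 × ZMod q) : Lfun q v < kcol q := by
  have hv := ZMod.val_lt v.2
  unfold Lfun kcol
  split_ifs <;> omega

lemma L_f1 {i : ℕ} (hi : i < kcol q) : Lfun q (fone q i) = i := by
  unfold kcol at hi
  rcases Nat.eq_zero_or_pos i with h0 | h0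
  · subst h0; simp [fone, Lfun]
  by_cases hiq : i < q
  · rw [fone, if_neg (by omega), if_pos hiq]
    simp only [Lfun, if_pos rfl]
    exact ZMod.val_cast_of_lt hiq
  · rw [fone, if_neg (by omega), if_neg hiq]
    have hx : i - q < q := by omega
    simp only [Lfun]
    rw [if_neg (by decide), if_pos (by decide), ZMod.val_cast_of_lt hx, if_pos (by omega)]
    omega

lemma L_f2 {i : ℕ} (hi : i < kcol q) : Lfun q (ftwo q i) = i := by
  unfold kcol at hi
  rcases Nat.eq_zero_or_pos i with h0 | h0
  · subst h0; simp [ftwo, Lfun]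
  by_cases h1 : i ≤ (q - 1) / 2
  · rw [ftwo, if_neg (by omega), if_pos h1]
    have hv : (-(i : ZMod q)).val = q - i := val_neg_nat (by omega) (by omega)
    simp only [Lfun]
    rw [if_neg (by decide), if_pos (by decide), hv, if_neg (by omega)]
    omega
  by_cases h2 : i < q
  · rw [ftwo, if_neg (by omega), if_neg h1, if_pos h2]
    have hv : (-(i : ZMod q)).val = q - i := val_neg_nat (by omega) (by omega)
    simp only [Lfun]
    rw [if_neg (by decide), if_neg (by decide), if_neg (by omega), if_pos (by omega)]
    omega
  · rw [ftwo, if_neg (by omega), if_neg h1, if_neg h2]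
    set x := i - q with hxdef
    have hx : x ≤ (q - 1) / 2 := by omega
    by_cases hx0 : x = 0
    · rw [hx0]
      have : yfun q 0 = (q - 1) / 2 := by simp [yfun]
      rw [this]
      have hv : (-(((q - 1) / 2 : ℕ) : ZMod q)).val = q - (q - 1) / 2 := val_neg_nat (by omega) (by omega)
      simp only [Lfun]
      rw [if_neg (by decide), if_neg (by decide), if_neg (by omega), if_neg (by omega),
        if_pos (by omega)]
      omega
    by_cases hxh : x = (q - 1) / 2
    · rw [hxh]
      have : yfun q ((q - 1) / 2) = 0 := by
        rw [yfun, if_neg (by omega), if_pos rfl]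
      rw [this]
      simp only [Lfun, Nat.cast_zero, neg_zero]
      rw [if_neg (by decide), if_neg (by decide), if_pos (ZMod.val_zero)]
      omega
    · have : yfun q x = x := by rw [yfun, if_neg hx0, if_neg hxh]
      rw [this]
      have hv : (-((x : ℕ) : ZMod q)).val = q - x := val_neg_nat hx0 (by omega)
      simp only [Lfun]
      rw [if_neg (by decide), if_neg (by decide), if_neg (by omega), if_neg (by omega),
        if_neg (by omega)]
      omega

lemma fiber (v : ZMod 3 × ZMod q) :
    v = fone q (Lfun q v) ∨ v = ftwo q (Lfun q v) := by
  obtain ⟨a, b⟩ := v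
  have hb := ZMod.val_lt b
  have h3 : a = 0 ∨ a = 1 ∨ a = 2 := by revert a; decide
  have hbv : ((b.val : ℕ) : ZMod q) = b := vself b
  rcases h3 with rfl | rfl | rfl
  · -- a = 0 : color = b.val
    have hL : Lfun q (0, b) = b.val := by simp [Lfun]
    rw [hL]
    by_cases h0 : b.val = 0
    · left; rw [fone, if_pos h0]
      have : b = 0 := by rw [← hbv, h0]; simp
      rw [this]
    · left; rw [fone, if_neg h0, if_pos hb, hbv]
  · by_cases h1 : b.val ≤ (q - 1) / 2
    · -- color q + b.val, equals fone
      have hL : Lfun q (1, b) = q + b.val := by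
        simp only [Lfun]; rw [if_neg (by decide), if_pos (by decide), if_pos h1]
      rw [hL]
      left; rw [fone, if_neg (by omega), if_neg (by omega)]
      have : q + b.val - q = b.val := by omega
      rw [this, hbv]
    · -- color q - b.val ∈ [1, half], equals ftwo
      have hL : Lfun q (1, b) = q - b.val := by
        simp only [Lfun]; rw [if_neg (by decide), if_pos (by decide), if_neg h1]
      rw [hL]
      right; rw [ftwo, if_neg (by omega), if_pos (by omega)]
      rw [← neg_nat_cast (by omega)]
      have : q - (q - b.val) = b.val := by omega
      rw [this, hbv]
  · by_cases h0 : b.val = 0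
    · -- color q + half : ftwo with x = half, partner 0
      have hL : Lfun q (2, b) = q + (q - 1) / 2 := by
        simp only [Lfun]; rw [if_neg (by decide), if_neg (by decide), if_pos h0]
      rw [hL]
      right; rw [ftwo, if_neg (by omega), if_neg (by omega), if_neg (by omega)]
      have hy : yfun q (q + (q - 1) / 2 - q) = 0 := by
        rw [yfun, if_neg (by omega), if_pos (by omega)]
      rw [hy]
      have : b = 0 := by rw [← hbv, h0]; simp
      rw [this]; norm_num
    by_cases h1 : b.val ≤ (q - 1) / 2
    · -- color q - b.val : ftwo, P companion
      have hL : Lfun q (2, b) = q - b.val := by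
        simp only [Lfun]; rw [if_neg (by decide), if_neg (by decide), if_neg h0, if_pos h1]
      rw [hL]
      right; rw [ftwo, if_neg (by omega), if_neg (by omega), if_pos (by omega)]
      rw [← neg_nat_cast (by omega)]
      have : q - (q - b.val) = b.val := by omega
      rw [this, hbv]
    by_cases h2 : b.val = (q - 1) / 2 + 1
    · -- color q : ftwo with x = 0, partner -half, val = half+1
      have hL : Lfun q (2, b) = q := by
        simp only [Lfun]; rw [if_neg (by decide), if_neg (by decide), if_neg h0, if_neg h1,
          if_pos h2]
      rw [hL]
      right; rw [ftwo, if_neg (by omega), if_neg (by omega), if_neg (by omega)]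
      have hy : yfun q (q - q) = (q - 1) / 2 := by
        rw [yfun, if_pos (by omega)]
      rw [hy, ← neg_nat_cast (by omega)]
      have : q - (q - 1) / 2 = b.val := by omega
      rw [this, hbv]
    · -- color q + (q - b.val) : ftwo with x = q - b.val ∈ [1, half-1]
      have hL : Lfun q (2, b) = q + (q - b.val) := by
        simp only [Lfun]; rw [if_neg (by decide), if_neg (by decide), if_neg h0, if_neg h1,
          if_neg h2]
      rw [hL]
      right; rw [ftwo, if_neg (by omega), if_neg (by omega), if_neg (by omega)]
      have hy : yfun q (q + (q - b.val) - q) = q - b.val := by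
        rw [yfun, if_neg (by omega), if_neg (by omega)]; omega
      rw [hy, ← neg_nat_cast (by omega)]
      have : q - (q - b.val) = b.val := by omega
      rw [this, hbv]

lemma indep (i : ℕ) : ¬ (Gp q).Adj (fone q i) (ftwo q i) := by
  by_cases h0 : i = 0
  · subst h0
    simp only [fone, ftwo, if_pos rfl]
    exact (Gp q).loopless.irrefl _
  by_cases h1 : i ≤ (q - 1) / 2
  · rw [fone, ftwo, if_neg h0, if_pos (by omega), if_neg h0, if_pos h1]
    rintro ⟨-, -, h⟩; exact h (by ring)
  by_cases h2 : i < q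
  · rw [fone, ftwo, if_neg h0, if_pos h2, if_neg h0, if_neg h1, if_pos h2]
    rintro ⟨-, -, h⟩; exact h (by ring)
  · rw [fone, ftwo, if_neg h0, if_neg h2, if_neg h0, if_neg h1, if_neg h2]
    rintro ⟨-, h, -⟩
    exact h (show (1 : ZMod 3) + 2 = 0 by decide)

lemma pairs {i j : ℕ} (hi : i < kcol q) (hj : j < kcol q) (hij : i < j) :
    ∃ u v, (Gp q).Adj u v ∧ (u = fone q i ∨ u = ftwo q i) ∧ (v = fone q j ∨ v = ftwo q j) := by
  unfold kcol at hi hj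
  have hq0 : 0 < q := by omega
  by_cases hi0 : i = 0
  · subst hi0
    -- u = (0,0)
    by_cases hjq : j < q
    · -- v = ftwo j = (1 or 2, -j)
      refine ⟨(0, 0), ftwo q j, ?_, Or.inl (by rw [fone, if_pos rfl]), Or.inr rfl⟩
      have hj0 : (j : ZMod q) ≠ 0 := cne0 (by omega) hjq
      rw [ftwo, if_neg (by omega)]
      by_cases h1 : j ≤ (q - 1) / 2
      · rw [if_pos h1]
        exact ⟨pne1 (by decide), (show (0:ZMod 3) + 1 ≠ 0 by decide), by simpa using neg_ne_zero.mpr hj0⟩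
      · rw [if_neg h1, if_pos hjq]
        exact ⟨pne1 (by decide), (show (0:ZMod 3) + 2 ≠ 0 by decide), by simpa using neg_ne_zero.mpr hj0⟩
    · set x := j - q with hx
      by_cases hx0 : x = 0
      · -- v = ftwo j = (2, -half)
        refine ⟨(0, 0), ftwo q j, ?_, Or.inl (by rw [fone, if_pos rfl]), Or.inr rfl⟩
        rw [ftwo, if_neg (by omega), if_neg (by omega), if_neg hjq, ← hx, hx0]
        have hy : yfun q 0 = (q - 1) / 2 := by simp [yfun]
        rw [hy]
        have : ((((q - 1) / 2 : ℕ)) : ZMod q) ≠ 0 := cne0 (by omega) (by omega)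
        exact ⟨pne1 (by decide), (show (0:ZMod 3) + 2 ≠ 0 by decide), by simpa using neg_ne_zero.mpr this⟩
      · -- v = fone j = (1, x)
        refine ⟨(0, 0), fone q j, ?_, Or.inl (by rw [fone, if_pos rfl]), Or.inl rfl⟩
        rw [fone, if_neg (by omega), if_neg hjq, ← hx]
        have : ((x : ℕ) : ZMod q) ≠ 0 := cne0 hx0 (by omega)
        exact ⟨pne1 (by decide), (show (0:ZMod 3) + 1 ≠ 0 by decide), by simpa using this⟩
  · by_cases hiq : i < q
    · by_cases hjq : j < q
      · -- P vs P : u = (0, i), v = ftwo j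
        refine ⟨(0, (i : ZMod q)), ftwo q j, ?_,
          Or.inl (by rw [fone, if_neg hi0, if_pos hiq]), Or.inr rfl⟩
        have hvi : ((i : ℕ) : ZMod q).val = i := ZMod.val_cast_of_lt hiq
        have hvj : (-(j : ZMod q)).val = q - j := val_neg_nat (by omega) hjq
        have hsum : ((i : ℕ) : ZMod q) + -(j : ZMod q) ≠ 0 :=
          add_ne_zero_vals (by rw [hvi, hvj]; omega) (by rw [hvi, hvj]; omega)
        rw [ftwo, if_neg (by omega)]
        by_cases h1 : j ≤ (q - 1) / 2
        · rw [if_pos h1]; exact ⟨pne1 (by decide), (show (0:ZMod 3) + 1 ≠ 0 by decide), hsum⟩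
        · rw [if_neg h1, if_pos hjq]; exact ⟨pne1 (by decide), (show (0:ZMod 3) + 2 ≠ 0 by decide), hsum⟩
      · -- P vs Q
        set x := j - q with hx
        have hxh : x ≤ (q - 1) / 2 := by omega
        by_cases hix : i + x = q
        · -- use v = ftwo j = (2, -(yfun q x))
          refine ⟨(0, (i : ZMod q)), ftwo q j, ?_,
            Or.inl (by rw [fone, if_neg hi0, if_pos hiq]), Or.inr rfl⟩
          rw [ftwo, if_neg (by omega), if_neg (by omega), if_neg hjq, ← hx]
          have hvi : ((i : ℕ) : ZMod q).val = i := ZMod.val_cast_of_lt hiq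
          by_cases hxhalf : x = (q - 1) / 2
          · have hy : yfun q x = 0 := by rw [yfun, if_neg (by omega), if_pos hxhalf]
            rw [hy]
            refine ⟨pne1 (by decide), (show (0:ZMod 3) + 2 ≠ 0 by decide), ?_⟩
            simpa using cne0 (m := i) (by omega) hiq
          · have hx1 : x ≠ 0 := by omega
            have hy : yfun q x = x := by rw [yfun, if_neg hx1, if_neg hxhalf]
            rw [hy]
            have hvx : (-((x : ℕ) : ZMod q)).val = q - x := val_neg_nat hx1 (by omega)
            refine ⟨pne1 (by decide), (show (0:ZMod 3) + 2 ≠ 0 by decide), ?_⟩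
            exact add_ne_zero_vals (by rw [hvi, hvx]; omega) (by rw [hvi, hvx]; omega)
        · -- use v = fone j = (1, x)
          refine ⟨(0, (i : ZMod q)), fone q j, ?_,
            Or.inl (by rw [fone, if_neg hi0, if_pos hiq]), Or.inl rfl⟩
          rw [fone, if_neg (by omega), if_neg hjq, ← hx]
          have hvi : ((i : ℕ) : ZMod q).val = i := ZMod.val_cast_of_lt hiq
          have hvx : ((x : ℕ) : ZMod q).val = x := ZMod.val_cast_of_lt (by omega)
          refine ⟨pne1 (by decide), (show (0:ZMod 3) + 1 ≠ 0 by decide), ?_⟩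
          exact add_ne_zero_vals (by rw [hvi, hvx]; omega) (by rw [hvi, hvx]; omega)
    · -- Q vs Q : u = (1, i - q), v = (1, j - q)
      have hjq : ¬ j < q := by omega
      refine ⟨fone q i, fone q j, ?_, Or.inl rfl, Or.inl rfl⟩
      rw [fone, if_neg hi0, if_neg hiq, fone, if_neg (by omega), if_neg hjq]
      have hvi : ((i - q : ℕ) : ZMod q).val = i - q := ZMod.val_cast_of_lt (by omega)
      have hvj : ((j - q : ℕ) : ZMod q).val = j - q := ZMod.val_cast_of_lt (by omega)
      refine ⟨pne2 (ne_of_val_ne (by rw [hvi, hvj]; omega)), (show (1:ZMod 3) + 1 ≠ 0 by decide), ?_⟩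
      exact add_ne_zero_vals (by rw [hvi, hvj]; omega) (by rw [hvi, hvj]; omega)


lemma lower_exists :
    ∃ C : (Gp q).Coloring (Fin (kcol q)), IsCompleteColoring (Gp q) C := by
  have valid : ∀ {u v : ZMod 3 × ZMod q}, (Gp q).Adj u v →
      (⟨Lfun q u, L_lt hodd hq5 u⟩ : Fin (kcol q)) ≠ ⟨Lfun q v, L_lt hodd hq5 v⟩ := by
    intro u v hadj hEq
    have hL : Lfun q u = Lfun q v := by simpa using congrArg Fin.val hEq
    rcases fiber hodd hq5 u with hu | hu <;> rcases fiber hodd hq5 v with hv | hv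
    · exact hadj.ne (by rw [hu, hv, hL])
    · refine indep hodd hq5 (Lfun q v) ?_
      rw [hL] at hu
      rw [← hu, ← hv]; exact hadj
    · refine indep hodd hq5 (Lfun q v) ?_
      rw [hL] at hu
      rw [← hv, ← hu]; exact hadj.symm
    · exact hadj.ne (by rw [hu, hv, hL])
  refine ⟨SimpleGraph.Coloring.mk (fun v => ⟨Lfun q v, L_lt hodd hq5 v⟩) valid, ?_, ?_⟩
  · intro c
    refine ⟨fone q c.val, ?_⟩
    exact Fin.ext (L_f1 hodd hq5 c.isLt)
  · intro c₁ c₂ hne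
    have hvne : c₁.val ≠ c₂.val := fun h => hne (Fin.ext h)
    have key : ∀ (a b : Fin (kcol q)), a.val < b.val →
        ∃ x y, (Gp q).Adj x y ∧
          (⟨Lfun q x, L_lt hodd hq5 x⟩ : Fin (kcol q)) = a ∧
          (⟨Lfun q y, L_lt hodd hq5 y⟩ : Fin (kcol q)) = b := by
      intro a b hab
      obtain ⟨u, v, hadj, hu, hv⟩ := pairs hodd hq5 a.isLt b.isLt hab
      refine ⟨u, v, hadj, ?_, ?_⟩
      · apply Fin.ext; simp only
        rcases hu with rfl | rfl
        · exact L_f1 hodd hq5 a.isLt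
        · exact L_f2 hodd hq5 a.isLt
      · apply Fin.ext; simp only
        rcases hv with rfl | rfl
        · exact L_f1 hodd hq5 b.isLt
        · exact L_f2 hodd hq5 b.isLt
    rcases lt_or_gt_of_ne hvne with h | h
    · exact key c₁ c₂ h
    · obtain ⟨x, y, hadj, hx, hy⟩ := key c₂ c₁ h
      exact ⟨y, x, hadj.symm, hy, hx⟩

open Finset in
lemma upper_bound {k : ℕ} (C : (Gp q).Coloring (Fin k))
    (hC : IsCompleteColoring (Gp q) C) : k ≤ kcol q := by
  classical
  set cls : Fin k → Finset (ZMod 3 × ZMod q) :=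
    fun c => Finset.univ.filter (fun v => C v = c) with hcls
  have memcls : ∀ v, v ∈ cls (C v) := fun v => by simp [hcls]
  have clsmem : ∀ {v c}, v ∈ cls c → C v = c := fun {v c} h => by
    simpa [hcls] using h
  have nonadj : ∀ {u v : ZMod 3 × ZMod q} {c}, u ∈ cls c → v ∈ cls c → u ≠ v →
      (u.1 + v.1 = 0 ∨ u.2 + v.2 = 0) := by
    intro u v c hu hv huv
    have hnot : ¬ (Gp q).Adj u v := fun h => C.valid h (by rw [clsmem hu, clsmem hv])
    by_contra hcon
    push_neg at hcon
    exact hnot ⟨huv, hcon.1, hcon.2⟩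
  have hne : ∀ c, (cls c).Nonempty := fun c => by
    obtain ⟨v, hv⟩ := hC.1 c; exact ⟨v, hv ▸ memcls v⟩
  set PA : Fin k → Prop := fun c => ∀ v ∈ cls c, v.1 = (0 : ZMod 3) with hPA
  set PM : Fin k → Prop := fun c => ∃ v ∈ cls c, v.1 = (0 : ZMod 3) with hPM
  set SA := Finset.univ.filter PA with hSA
  set Srest := Finset.univ.filter (fun c => ¬ PA c) with hSrest
  set SC := Srest.filter PM with hSC
  set SB := Srest.filter (fun c => ¬ PM c) with hSB
  set Sing := SB.filter (fun c => (cls c).card = 1) with hSing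
  set NSing := SB.filter (fun c => ¬ (cls c).card = 1) with hNSing
  -- partition of colors
  have hk1 : SA.card + Srest.card = k := by
    rw [hSA, hSrest, Finset.card_filter_add_card_filter_not, Finset.card_univ,
      Fintype.card_fin]
  have hk2 : SC.card + SB.card = Srest.card := by
    rw [hSC, hSB, Finset.card_filter_add_card_filter_not]
  have hk3 : Sing.card + NSing.card = SB.card := by
    rw [hSing, hNSing, Finset.card_filter_add_card_filter_not]
  -- total count
  have htotal : ∑ c ∈ Finset.univ, (cls c).card = 3 * q := by
    rw [hcls, ← Finset.card_eq_sum_card_fiberwise (f := C) (s := Finset.univ)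
      (t := Finset.univ) (fun x _ => Finset.mem_univ _)]
    simp [Finset.card_univ, ZMod.card]
  have hsplit1 : ∑ c ∈ SA, (cls c).card + ∑ c ∈ Srest, (cls c).card
      = ∑ c ∈ Finset.univ, (cls c).card := by
    rw [hSA, hSrest]; exact Finset.sum_filter_add_sum_filter_not _ _ _
  have hsplit2 : ∑ c ∈ SC, (cls c).card + ∑ c ∈ SB, (cls c).card
      = ∑ c ∈ Srest, (cls c).card := by
    rw [hSC, hSB]; exact Finset.sum_filter_add_sum_filter_not _ _ _
  have hsplit3 : ∑ c ∈ Sing, (cls c).card + ∑ c ∈ NSing, (cls c).card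
      = ∑ c ∈ SB, (cls c).card := by
    rw [hSing, hNSing]; exact Finset.sum_filter_add_sum_filter_not _ _ _
  -- SA has at most one element
  have hSAcard : SA.card ≤ 1 := by
    refine Finset.card_le_one.mpr ?_
    intro a ha b hb
    by_contra hab
    obtain ⟨x, y, hadj, hx, hy⟩ := hC.2 a b hab
    have hxa : x.1 = 0 := (Finset.mem_filter.mp ha).2 x (hx ▸ memcls x)
    have hyb : y.1 = 0 := (Finset.mem_filter.mp hb).2 y (hy ▸ memcls y)
    exact hadj.2.1 (by rw [hxa, hyb, add_zero])
  -- SC classes have at least 2 elements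
  have hSCsz : ∀ c ∈ SC, 2 ≤ (cls c).card := by
    intro c hc
    obtain ⟨hcr, hpm⟩ := Finset.mem_filter.mp hc
    have hnpa : ¬ PA c := (Finset.mem_filter.mp hcr).2
    simp only [hPA] at hnpa; push_neg at hnpa
    obtain ⟨u, hu, hu1⟩ := hnpa
    obtain ⟨w, hw, hw1⟩ := hpm
    exact Finset.one_lt_card.mpr ⟨u, hu, w, hw, fun h => hu1 (h ▸ hw1)⟩
  have hSCsum : 2 * SC.card ≤ ∑ c ∈ SC, (cls c).card := by
    calc 2 * SC.card = SC.card * 2 := by ring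
    _ ≤ ∑ c ∈ SC, (cls c).card := by
        simpa using Finset.card_nsmul_le_sum SC (fun c => (cls c).card) 2 hSCsz
  have hNSsum : 2 * NSing.card ≤ ∑ c ∈ NSing, (cls c).card := by
    have h2 : ∀ c ∈ NSing, 2 ≤ (cls c).card := by
      intro c hc
      have hcard1 : ¬ (cls c).card = 1 := (Finset.mem_filter.mp hc).2
      have := (hne c).card_pos
      omega
    calc 2 * NSing.card = NSing.card * 2 := by ring
    _ ≤ _ := by simpa using Finset.card_nsmul_le_sum NSing (fun c => (cls c).card) 2 h2
  -- the singleton vertex of a singleton class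
  set pick : Fin k → (ZMod 3 × ZMod q) :=
    fun c => if h : (cls c).card = 1 then (Finset.card_eq_one.mp h).choose else (0, 0)
    with hpickdef
  have hpick : ∀ c, (cls c).card = 1 → cls c = {pick c} := by
    intro c h
    rw [hpickdef]; simp only [dif_pos h]
    exact (Finset.card_eq_one.mp h).choose_spec
  have hSBv1 : ∀ c ∈ SB, ∀ v ∈ cls c, v.1 ≠ (0 : ZMod 3) := by
    intro c hc v hv
    have hnpm : ¬ PM c := (Finset.mem_filter.mp hc).2
    simp only [hPM] at hnpm; push_neg at hnpm
    exact hnpm v hv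
  -- key step: the "mirror" M-vertex of a singleton class lies in an SA class
  have key : ∀ c ∈ Sing, C ((0 : ZMod 3), -(pick c).2) ∈ SA := by
    intro c hc
    obtain ⟨hcSB, hcard⟩ := Finset.mem_filter.mp hc
    have hcls1 : cls c = {pick c} := hpick c hcard
    set v := pick c with hv
    have hvmem : v ∈ cls c := by rw [hcls1]; exact Finset.mem_singleton_self _
    have hv1 : v.1 ≠ 0 := hSBv1 c hcSB v hvmem
    set w : ZMod 3 × ZMod q := ((0 : ZMod 3), -v.2) with hw
    refine Finset.mem_filter.mpr ⟨Finset.mem_univ _, ?_⟩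
    show ∀ v ∈ cls (C ((0 : ZMod 3), -(pick c).2)), v.1 = (0 : ZMod 3)
    by_contra hcon
    push_neg at hcon
    obtain ⟨u, hu, hu1⟩ := hcon
    have hwu : w ≠ u := fun h => hu1 (by rw [← h])
    have hwmem : w ∈ cls (C w) := memcls w
    have hu2 : u.2 = v.2 := by
      rcases nonadj hwmem hu hwu with h3 | hq2
      · exact absurd (by simpa [hw] using h3) hu1
      · have : -v.2 + u.2 = 0 := hq2
        linear_combination this
    have hCwc : C w ≠ c := by
      intro h
      have : w ∈ cls c := h ▸ memcls w
      rw [hcls1] at this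
      have := Finset.mem_singleton.mp this
      exact hv1 (by rw [← this])
    obtain ⟨x, y, hadj, hx, hy⟩ := hC.2 c (C w) (Ne.symm hCwc)
    have hxv : x = v := by
      have : x ∈ cls c := hx ▸ memcls x
      rw [hcls1] at this
      exact Finset.mem_singleton.mp this
    rw [hxv] at hadj
    have hymem : y ∈ cls (C w) := hy ▸ memcls y
    by_cases hy1 : y.1 = 0
    · by_cases hyw : y = w
      · rw [hyw] at hadj
        exact hadj.2.2 (add_neg_cancel v.2)
      · have hyu : y ≠ u := fun h => hu1 (h ▸ hy1)
        rcases nonadj hymem hu hyu with h3 | hq3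
        · exact hu1 (by rw [hy1] at h3; simpa using h3)
        · have hy2 : y.2 = -v.2 := by rw [← hu2]; linear_combination hq3
          exact hyw (Prod.ext hy1 hy2)
    · have hyw : y ≠ w := fun h => hy1 (by rw [h])
      rcases nonadj hymem hwmem hyw with h3 | hq3
      · exact hy1 (by simpa [hw] using h3)
      · have hy2 : y.2 = v.2 := by
          have : y.2 + -v.2 = 0 := hq3
          linear_combination this
        have hyv : y ≠ v := by
          intro h
          exact hCwc (by rw [← hy, h, clsmem hvmem])
        have hy1v : y.1 ≠ v.1 := fun h => hyv (Prod.ext h hy2)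
        exact hadj.2.1 (by rw [add_comm]; exact z3add hy1 hv1 hy1v)
  -- injectivity of the mirror map on singletons
  set T := Finset.univ.filter (fun w : ZMod 3 × ZMod q => C w ∈ SA) with hT
  have hSingT : Sing.card ≤ T.card := by
    refine Finset.card_le_card_of_injOn
      (fun c => ((0 : ZMod 3), -(pick c).2)) ?_ ?_
    · intro c hc
      exact Finset.mem_filter.mpr ⟨Finset.mem_univ _, key c hc⟩
    · intro c hc c' hc' hf
      simp only at hf
      have hv2 : (pick c).2 = (pick c').2 := by
        have := congrArg Prod.snd hf
        simpa using this
      by_contra hcc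
      obtain ⟨x, y, hadj, hx, hy⟩ := hC.2 c c' hcc
      obtain ⟨hcSB, hcard⟩ := Finset.mem_filter.mp hc
      obtain ⟨hcSB', hcard'⟩ := Finset.mem_filter.mp hc'
      have hxv : x = pick c := by
        have : x ∈ cls c := hx ▸ memcls x
        rw [hpick c hcard] at this
        exact Finset.mem_singleton.mp this
      have hyv : y = pick c' := by
        have : y ∈ cls c' := hy ▸ memcls y
        rw [hpick c' hcard'] at this
        exact Finset.mem_singleton.mp this
      rw [hxv, hyv] at hadj
      have h1 : (pick c).1 ≠ 0 := hSBv1 c hcSB _ (by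
        rw [hpick c hcard]; exact Finset.mem_singleton_self _)
      have h1' : (pick c').1 ≠ 0 := hSBv1 c' hcSB' _ (by
        rw [hpick c' hcard']; exact Finset.mem_singleton_self _)
      by_cases h11 : (pick c).1 = (pick c').1
      · exact hadj.ne (Prod.ext h11 hv2)
      · exact hadj.2.1 (z3add h1 h1' h11)
  have hTsum : T.card ≤ ∑ c ∈ SA, (cls c).card := by
    calc T.card ≤ (SA.biUnion cls).card := by
          refine Finset.card_le_card ?_
          intro w hw
          refine Finset.mem_biUnion.mpr ⟨C w, (Finset.mem_filter.mp hw).2, memcls w⟩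
    _ ≤ ∑ c ∈ SA, (cls c).card := Finset.card_biUnion_le
  -- singleton classes contribute exactly their card
  have hSingsum : ∑ c ∈ Sing, (cls c).card = Sing.card := by
    rw [Finset.sum_congr rfl (fun c hc => (Finset.mem_filter.mp hc).2), Finset.sum_const,
      smul_eq_mul, mul_one]
  -- put everything together
  have hfinal : 2 * k ≤ 3 * q + 1 := by
    have e1 : Sing.card ≤ ∑ c ∈ SA, (cls c).card := le_trans hSingT hTsum
    omega
  unfold kcol
  omega

end Con


theorem stmt_3 (q : ℕ) (hq : q.Prime) (h3 : 3 < q) :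
    achromaticNumber (unitaryCayley (ZMod (3 * q))) = (3 * q + 1) / 2 := by

  haveI hF : Fact q.Prime := ⟨hq⟩
  haveI : NeZero q := ⟨hq.pos.ne'⟩
  haveI : Fact (Nat.Prime 3) := ⟨by norm_num⟩
  have hodd : q % 2 = 1 := Nat.odd_iff.mp (hq.odd_of_ne_two (by omega))
  have hq5 : 5 ≤ q := by omega
  have cop : Nat.Coprime 3 q := (Nat.coprime_primes (by norm_num) hq).mpr (by omega)
  set e := ZMod.chineseRemainder cop with he
  have hunit : ∀ z : ZMod (3 * q), IsUnit z ↔ ((e z).1 ≠ 0 ∧ (e z).2 ≠ 0) := by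
    intro z
    constructor
    · intro h
      have h2 : IsUnit (e z) := h.map e.toRingHom
      have hfst : IsUnit (e z).1 := h2.map (RingHom.fst (ZMod 3) (ZMod q))
      have hsnd : IsUnit (e z).2 := h2.map (RingHom.snd (ZMod 3) (ZMod q))
      exact ⟨isUnit_iff_ne_zero.mp hfst, isUnit_iff_ne_zero.mp hsnd⟩
    · rintro ⟨h1, h2⟩
      obtain ⟨a, ha⟩ := isUnit_iff_ne_zero.mpr h1
      obtain ⟨b, hb⟩ := isUnit_iff_ne_zero.mpr h2
      have hu : IsUnit (e z) := by
        refine IsUnit.of_mul_eq_one (((a⁻¹ : (ZMod 3)ˣ) : ZMod 3),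
          ((b⁻¹ : (ZMod q)ˣ) : ZMod q)) ?_
        have hz : e z = ((e z).1, (e z).2) := rfl
        rw [hz, Prod.mk_mul_mk, ← ha, ← hb, Units.mul_inv, Units.mul_inv]
        rfl
      have := hu.map e.symm.toRingHom
      rwa [show e.symm.toRingHom (e z) = z from e.symm_apply_apply z] at this
  have hadj : ∀ x y : ZMod (3 * q),
      (unitaryCayley (ZMod (3 * q))).Adj x y ↔ (Gp q).Adj (e x) (e y) := by
    intro x y
    show (x ≠ y ∧ IsUnit (x + y)) ↔ _
    rw [gp_adj]
    constructor
    · rintro ⟨hne, hu⟩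
      have h2 := (hunit (x + y)).mp hu
      rw [map_add] at h2
      exact ⟨fun h => hne (e.injective h), h2.1, h2.2⟩
    · rintro ⟨hne, h1, h2⟩
      refine ⟨fun h => hne (by rw [h]), ?_⟩
      rw [hunit, map_add]
      exact ⟨h1, h2⟩
  have trans1 : ∀ (C' : (Gp q).Coloring (Fin (kcol q))), IsCompleteColoring (Gp q) C' →
      ∃ C : (unitaryCayley (ZMod (3 * q))).Coloring (Fin (kcol q)),
        IsCompleteColoring (unitaryCayley (ZMod (3 * q))) C := by
    intro C' hC'
    refine ⟨SimpleGraph.Coloring.mk (fun x => C' (e x))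
      (fun {u v} h => C'.valid ((hadj u v).mp h)), ?_, ?_⟩
    · intro c
      obtain ⟨p, hp⟩ := hC'.1 c
      refine ⟨e.symm p, ?_⟩
      show C' (e (e.symm p)) = c
      rw [RingEquiv.apply_symm_apply]; exact hp
    · intro c1 c2 hne
      obtain ⟨x, y, hxy, h1, h2⟩ := hC'.2 c1 c2 hne
      refine ⟨e.symm x, e.symm y, ?_, ?_, ?_⟩
      · rw [hadj, RingEquiv.apply_symm_apply, RingEquiv.apply_symm_apply]
        exact hxy
      · show C' (e (e.symm x)) = c1
        rw [RingEquiv.apply_symm_apply]; exact h1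
      · show C' (e (e.symm y)) = c2
        rw [RingEquiv.apply_symm_apply]; exact h2
  have trans2 : ∀ (k : ℕ) (C : (unitaryCayley (ZMod (3 * q))).Coloring (Fin k)),
      IsCompleteColoring (unitaryCayley (ZMod (3 * q))) C →
      ∃ C' : (Gp q).Coloring (Fin k), IsCompleteColoring (Gp q) C' := by
    intro k C hC
    have valid : ∀ {u v : ZMod 3 × ZMod q}, (Gp q).Adj u v →
        C (e.symm u) ≠ C (e.symm v) := by
      intro u v h
      apply C.valid
      rw [hadj, RingEquiv.apply_symm_apply, RingEquiv.apply_symm_apply]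
      exact h
    refine ⟨SimpleGraph.Coloring.mk (fun p => C (e.symm p)) valid, ?_, ?_⟩
    · intro c
      obtain ⟨x, hx⟩ := hC.1 c
      refine ⟨e x, ?_⟩
      show C (e.symm (e x)) = c
      rw [RingEquiv.symm_apply_apply]; exact hx
    · intro c1 c2 hne
      obtain ⟨x, y, hxy, h1, h2⟩ := hC.2 c1 c2 hne
      refine ⟨e x, e y, ?_, ?_, ?_⟩
      · rw [← hadj]; exact hxy
      · show C (e.symm (e x)) = c1
        rw [RingEquiv.symm_apply_apply]; exact h1
      · show C (e.symm (e y)) = c2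
        rw [RingEquiv.symm_apply_apply]; exact h2
  have hmem : kcol q ∈ {n | ∃ C : (unitaryCayley (ZMod (3 * q))).Coloring (Fin n),
      IsCompleteColoring (unitaryCayley (ZMod (3 * q))) C} := by
    obtain ⟨C', hC'⟩ := lower_exists hodd hq5
    exact trans1 C' hC'
  have hub : ∀ n ∈ {n | ∃ C : (unitaryCayley (ZMod (3 * q))).Coloring (Fin n),
      IsCompleteColoring (unitaryCayley (ZMod (3 * q))) C}, n ≤ kcol q := by
    rintro n ⟨C, hC⟩
    obtain ⟨C', hC'⟩ := trans2 n C hC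
    exact upper_bound hodd hq5 C' hC'
  have : kcol q = (3 * q + 1) / 2 := rfl
  rw [← this]
  exact le_antisymm (csSup_le ⟨_, hmem⟩ hub) (le_csSup ⟨kcol q, hub⟩ hmem)
end

section
/- If q > 3 is a prime, then the achromatic number of the unitary addition Cayley graph U(ℤ_{3q}) is at most (3q + 1)/2. -/
private lemma prod_isUnit {M N : Type*} [Monoid M] [Monoid N] {p : M × N} :
    IsUnit p ↔ IsUnit p.1 ∧ IsUnit p.2 := by
  constructor
  · intro h
    exact ⟨h.map (MonoidHom.fst M N), h.map (MonoidHom.snd M N)⟩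
  · rintro ⟨⟨u, hu⟩, ⟨v, hv⟩⟩
    refine ⟨⟨p, ((u⁻¹ : Mˣ), (v⁻¹ : Nˣ)), ?_, ?_⟩, rfl⟩
    · have : p = ((u : M), (v : N)) := by
        rw [Prod.ext_iff]; exact ⟨hu.symm, hv.symm⟩
      rw [this, Prod.mk_mul_mk]
      simp
    · have : p = ((u : M), (v : N)) := by
        rw [Prod.ext_iff]; exact ⟨hu.symm, hv.symm⟩
      rw [this, Prod.mk_mul_mk]
      simp

private lemma adj_prod {q : ℕ} (hq : q.Prime) {v w : ZMod 3 × ZMod q} :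
    (unitaryCayley (ZMod 3 × ZMod q)).Adj v w ↔
      v ≠ w ∧ v.1 + w.1 ≠ 0 ∧ v.2 + w.2 ≠ 0 := by
  haveI := Fact.mk hq
  haveI : Fact (Nat.Prime 3) := ⟨by norm_num⟩
  show (v ≠ w ∧ IsUnit (v + w)) ↔ _
  rw [prod_isUnit, isUnit_iff_ne_zero, isUnit_iff_ne_zero]
  exact Iff.rfl

/-- Transfer a complete coloring along a graph isomorphism given as an `Equiv`. -/
private lemma transfer {V W : Type*} {G : SimpleGraph V} {H : SimpleGraph W} (e : W ≃ V)
    (he : ∀ v w : W, H.Adj v w ↔ G.Adj (e v) (e w)) {k : ℕ}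
    (C : G.Coloring (Fin k)) (hC : IsCompleteColoring G C) :
    ∃ C' : H.Coloring (Fin k), IsCompleteColoring H C' ∧ ∀ v, C' v = C (e v) := by
  refine ⟨SimpleGraph.Coloring.mk (fun v => C (e v))
      (fun {v w} hvw => C.valid ((he v w).mp hvw)), ⟨?_, ?_⟩, fun v => rfl⟩
  · intro c
    obtain ⟨x, hx⟩ := hC.1 c
    refine ⟨e.symm x, ?_⟩
    show C (e (e.symm x)) = c
    rwa [Equiv.apply_symm_apply]
  · intro c1 c2 hne
    obtain ⟨x, y, hxy, hx, hy⟩ := hC.2 c1 c2 hne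
    refine ⟨e.symm x, e.symm y, ?_, ?_, ?_⟩
    · rw [he]
      simpa [Equiv.apply_symm_apply] using hxy
    · show C (e (e.symm x)) = c1
      rwa [Equiv.apply_symm_apply]
    · show C (e (e.symm y)) = c2
      rwa [Equiv.apply_symm_apply]

/-- Main counting bound, assuming no color class is contained in the part with
first coordinate 2. -/
private lemma aux_bound {q : ℕ} (hq : q.Prime) (h3 : 3 < q) {k : ℕ}
    (C : (unitaryCayley (ZMod 3 × ZMod q)).Coloring (Fin k))
    (hC : IsCompleteColoring (unitaryCayley (ZMod 3 × ZMod q)) C)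
    (hV2 : ∀ c : Fin k, ∃ v, C v = c ∧ v.1 ≠ 2) :
    2 * k ≤ 3 * q + 2 := by
  haveI := Fact.mk hq
  haveI : NeZero q := ⟨hq.pos.ne'⟩
  obtain ⟨hsurj, hlink⟩ := hC
  have hadj : ∀ v w : ZMod 3 × ZMod q,
      (unitaryCayley (ZMod 3 × ZMod q)).Adj v w ↔
        v ≠ w ∧ v.1 + w.1 ≠ 0 ∧ v.2 + w.2 ≠ 0 := fun v w => adj_prod hq
  have tri : ∀ a : ZMod 3, a = 0 ∨ a = 1 ∨ a = 2 := by decide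
  -- vertices in the same class are non-adjacent
  have hind : ∀ v w : ZMod 3 × ZMod q, C v = C w → v ≠ w →
      v.1 + w.1 = 0 ∨ v.2 + w.2 = 0 := by
    intro v w h hne
    by_contra hcon
    push_neg at hcon
    exact C.valid ((hadj v w).mpr ⟨hne, hcon.1, hcon.2⟩) h
  -- at most one class is contained in V0
  have hU : ∀ c c' : Fin k, c ≠ c' → (∀ v, C v = c → v.1 = 0) →
      (∀ v, C v = c' → v.1 = 0) → False := by
    intro c c' hne hc hc'
    obtain ⟨a, b, hab, ha, hb⟩ := hlink c c' hne
    rw [hadj] at hab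
    apply hab.2.1
    rw [hc a ha, hc' b hb]
    decide
  -- key: if {u} with u.1 = 1 is a singleton class, then the class of (0, -u.2)
  -- is contained in V0
  have keyZ : ∀ u : ZMod 3 × ZMod q, u.1 = 1 → (∀ w, C w = C u → w = u) →
      ∀ w, C w = C ((0 : ZMod 3), -u.2) → w.1 = 0 := by
    intro u hu1 hsing
    have hxu : ((0 : ZMod 3), -u.2) ≠ u := by
      intro h
      rw [← h] at hu1
      simp at hu1
    have hcne : C ((0 : ZMod 3), -u.2) ≠ C u := fun h => hxu (hsing _ h)
    have hw2 : ∀ w, C w = C ((0 : ZMod 3), -u.2) → w.1 ≠ 0 →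
        w = ((2 : ZMod 3), u.2) := by
      intro w hw hw0
      have hne : w ≠ ((0 : ZMod 3), -u.2) := by
        intro h
        rw [h] at hw0
        exact hw0 rfl
      rcases hind w _ hw hne with h | h
      · exact absurd (by simpa using h) hw0
      · have hw2' : w.2 = u.2 := by
          have h' : w.2 + -u.2 = 0 := h
          rwa [← sub_eq_add_neg, sub_eq_zero] at h'
        rcases tri w.1 with h0 | h1 | h2
        · exact absurd h0 hw0
        · exfalso
          apply hcne
          rw [← hw]
          have : w = u := Prod.ext (h1.trans hu1.symm) hw2'
          rw [this]
        · exact Prod.ext h2 hw2'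
    intro w hwC
    by_contra hw0
    have hwval := hw2 w hwC hw0
    obtain ⟨a, b, hab, ha, hb⟩ := hlink _ _ hcne
    have hbu : b = u := hsing b hb
    rw [hadj] at hab
    obtain ⟨hne, h1, h2⟩ := hab
    rw [hbu] at h1 h2
    rcases tri a.1 with ha0 | ha1 | ha2
    · -- a ∈ V0, forced a.2 = -u.2, contradicting adjacency to u
      have hanw : a ≠ w := by
        intro h
        rw [h, hwval] at ha0
        simp at ha0
        exact absurd ha0 (by decide)
      rcases hind a w (ha.trans hwC.symm) hanw with hh | hh
      · rw [ha0, hwval] at hh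
        simp at hh
        exact absurd hh (by decide)
      · rw [hwval] at hh
        exact h2 (by simpa using hh)
    · have haval := hw2 a ha (by rw [ha1]; decide)
      rw [haval] at ha1
      simp at ha1
      exact absurd ha1 (by decide)
    · have haval := hw2 a ha (by rw [ha2]; decide)
      apply h1
      rw [haval, hu1]
      simp
      decide
  -- generic token-counting builder
  have fin2 : ∀ j : Fin 2, j ≠ 0 → j = 1 := by decide
  have build : ∀ R : Fin k → ((ZMod 3 × ZMod q) ⊕ Fin 2) → Prop,
      (∀ c c' t, c ≠ c' → R c t → R c' t → False) →
      (∀ c, ∃ t : ((ZMod 3 × ZMod q) ⊕ Fin 2) × ((ZMod 3 × ZMod q) ⊕ Fin 2),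
        t.1 ≠ t.2 ∧ R c t.1 ∧ R c t.2) →
      2 * k ≤ 3 * q + 2 := by
    intro R hdisj htok
    choose t ht1 ht2 ht3 using htok
    have hginj : Function.Injective
        (fun p : Fin k × Fin 2 => if p.2 = 0 then (t p.1).1 else (t p.1).2) := by
      rintro ⟨c, i⟩ ⟨c', i'⟩ h
      simp only [] at h
      by_cases hcc : c = c'
      · subst hcc
        have hii : i = i' := by
          by_cases hi : i = 0 <;> by_cases hi' : i' = 0
          · rw [hi, hi']
          · rw [if_pos hi, if_neg hi'] at h
            exact absurd h (ht1 c)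
          · rw [if_neg hi, if_pos hi'] at h
            exact absurd h.symm (ht1 c)
          · rw [fin2 i hi, fin2 i' hi']
        rw [hii]
      · exfalso
        have rc : R c (if i = 0 then (t c).1 else (t c).2) := by
          by_cases hi : i = 0
          · rw [if_pos hi]; exact ht2 c
          · rw [if_neg hi]; exact ht3 c
        have rc' : R c' (if i' = 0 then (t c').1 else (t c').2) := by
          by_cases hi' : i' = 0
          · rw [if_pos hi']; exact ht2 c'
          · rw [if_neg hi']; exact ht3 c'
        rw [h] at rc
        exact hdisj c c' _ hcc rc rc'
    have hcard := Fintype.card_le_of_injective _ hginj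
    rw [Fintype.card_prod, Fintype.card_sum, Fintype.card_prod, Fintype.card_fin,
      Fintype.card_fin, ZMod.card, ZMod.card] at hcard
    omega
  by_cases hA : ∃ cA : Fin k, ∀ v, C v = cA → v.1 = 0
  · obtain ⟨cA, hcA⟩ := hA
    apply build (fun c t => Sum.elim
      (fun v => c ≠ cA ∧ (C v = c ∨ ∃ u : ZMod 3 × ZMod q, u.1 = 1 ∧ C u = c ∧
        (∀ w, C w = c → w = u) ∧ v = ((0 : ZMod 3), -u.2)))
      (fun _ => c = cA) t)
    · -- disjointness
      rintro c c' t hne h h'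
      cases t with
      | inr e => exact hne (h.trans h'.symm)
      | inl v =>
        obtain ⟨hc, hd⟩ := h
        obtain ⟨hc', hd'⟩ := h'
        have spec : ∀ cc dd : Fin k, cc ≠ cA → C v = cc →
            (∃ u : ZMod 3 × ZMod q, u.1 = 1 ∧ C u = dd ∧
              (∀ w, C w = dd → w = u) ∧ v = ((0 : ZMod 3), -u.2)) → False := by
          rintro cc dd hccA hCv ⟨u, hu1, hcu, hsing, hveq⟩
          have hsing' : ∀ w, C w = C u → w = u := fun w hw => hsing w (hw.trans hcu)
          have hpure := keyZ u hu1 hsing'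
          have hcpure : ∀ w, C w = cc → w.1 = 0 := by
            intro w hw
            apply hpure
            rw [hw, ← hCv, hveq]
          exact hU cc cA hccA hcpure hcA
        rcases hd with hd | hd <;> rcases hd' with hd' | hd'
        · exact hne (hd.symm.trans hd')
        · exact spec c c' hc hd hd'
        · exact spec c' c hc' hd' hd
        · obtain ⟨u, hu1, hcu, hsing, hveq⟩ := hd
          obtain ⟨u', hu1', hcu', hsing', hveq'⟩ := hd'
          have h22 : u.2 = u'.2 := by
            have hh := hveq.symm.trans hveq'
            rw [Prod.mk.injEq] at hh
            exact neg_inj.mp hh.2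
          have huu : u = u' := Prod.ext (hu1.trans hu1'.symm) h22
          apply hne
          rw [← hcu, ← hcu', huu]
    · -- tokens
      intro c
      by_cases hc : c = cA
      · refine ⟨(Sum.inr 0, Sum.inr 1), ?_, hc, hc⟩
        intro h
        exact absurd (Sum.inr.inj h) (by decide)
      · by_cases h2 : ∃ v w : ZMod 3 × ZMod q, v ≠ w ∧ C v = c ∧ C w = c
        · obtain ⟨v, w, hvw, hv, hw⟩ := h2
          exact ⟨(Sum.inl v, Sum.inl w), fun h => hvw (Sum.inl.inj h),
            ⟨hc, Or.inl hv⟩, ⟨hc, Or.inl hw⟩⟩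
        · obtain ⟨u, hu⟩ := hsurj c
          have hsing : ∀ w, C w = c → w = u := by
            intro w hw
            by_contra hnw
            exact h2 ⟨w, u, hnw, hw, hu⟩
          rcases tri u.1 with h0 | h1 | h2'
          · exact (hU c cA hc (fun v hv => by rw [hsing v hv]; exact h0) hcA).elim
          · refine ⟨(Sum.inl u, Sum.inl ((0 : ZMod 3), -u.2)), ?_, ⟨hc, Or.inl hu⟩,
              ⟨hc, Or.inr ⟨u, h1, hu, hsing, rfl⟩⟩⟩
            intro h
            have hh := Sum.inl.inj h
            rw [hh] at h1
            simp at h1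
          · obtain ⟨v, hv, hv2⟩ := hV2 c
            exact absurd (by rw [hsing v hv]; exact h2') hv2
  · apply build (fun c t => Sum.elim (fun v => C v = c) (fun _ => False) t)
    · rintro c c' t hne h h'
      cases t with
      | inr e => exact h
      | inl v => exact hne (h.symm.trans h')
    · intro c
      by_cases h2 : ∃ v w : ZMod 3 × ZMod q, v ≠ w ∧ C v = c ∧ C w = c
      · obtain ⟨v, w, hvw, hv, hw⟩ := h2
        exact ⟨(Sum.inl v, Sum.inl w), fun h => hvw (Sum.inl.inj h), hv, hw⟩
      · obtain ⟨u, hu⟩ := hsurj c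
        have hsing : ∀ w, C w = c → w = u := by
          intro w hw
          by_contra hnw
          exact h2 ⟨w, u, hnw, hw, hu⟩
        rcases tri u.1 with h0 | h1 | h2'
        · exact absurd ⟨c, fun v hv => by rw [hsing v hv]; exact h0⟩ hA
        · have hsing' : ∀ w, C w = C u → w = u := fun w hw => hsing w (hw.trans hu)
          exact absurd ⟨C ((0 : ZMod 3), -u.2), keyZ u h1 hsing'⟩ hA
        · obtain ⟨v, hv, hv2⟩ := hV2 c
          exact absurd (by rw [hsing v hv]; exact h2') hv2

private lemma aux_bound2 {q : ℕ} (hq : q.Prime) (h3 : 3 < q) {k : ℕ}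
    (C : (unitaryCayley (ZMod 3 × ZMod q)).Coloring (Fin k))
    (hC : IsCompleteColoring (unitaryCayley (ZMod 3 × ZMod q)) C) :
    2 * k ≤ 3 * q + 1 := by
  have hodd : Odd q := hq.odd_of_ne_two (by omega)
  suffices h : 2 * k ≤ 3 * q + 2 by
    obtain ⟨m, hm⟩ := hodd
    omega
  by_cases hcase : ∀ c : Fin k, ∃ v, C v = c ∧ v.1 ≠ 2
  · exact aux_bound hq h3 C hC hcase
  · push_neg at hcase
    obtain ⟨c2, hc2⟩ := hcase
    have hnoV1 : ∀ c : Fin k, ∃ v, C v = c ∧ v.1 ≠ 1 := by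
      intro c
      by_contra hcon
      push_neg at hcon
      have hne : c ≠ c2 := by
        obtain ⟨v, hv⟩ := hC.1 c
        intro h
        have h1 := hcon v hv
        have h2' := hc2 v (by rw [← h]; exact hv)
        rw [h1] at h2'
        exact absurd h2' (by decide)
      obtain ⟨a, b, hab, ha, hb⟩ := hC.2 c c2 hne
      rw [adj_prod hq] at hab
      apply hab.2.1
      rw [hcon a ha, hc2 b hb]
      decide
    let e : (ZMod 3 × ZMod q) ≃ (ZMod 3 × ZMod q) :=
      ⟨fun p => (-p.1, p.2), fun p => (-p.1, p.2), fun p => by simp, fun p => by simp⟩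
    have he : ∀ v w : ZMod 3 × ZMod q,
        (unitaryCayley (ZMod 3 × ZMod q)).Adj v w ↔
        (unitaryCayley (ZMod 3 × ZMod q)).Adj (e v) (e w) := by
      intro v w
      rw [adj_prod hq, adj_prod hq]
      constructor
      · rintro ⟨hne, h1, h2⟩
        refine ⟨fun h => hne (e.injective h), ?_, h2⟩
        show -v.1 + -w.1 ≠ 0
        intro h
        exact h1 (by linear_combination -h)
      · rintro ⟨hne, h1, h2⟩
        refine ⟨fun h => hne (by rw [h]), ?_, h2⟩
        intro h
        apply h1
        show -v.1 + -w.1 = 0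
        linear_combination -h
    obtain ⟨C', hC', hform⟩ := transfer e he C hC
    apply aux_bound hq h3 C' hC'
    intro c
    obtain ⟨v, hv, hv1⟩ := hnoV1 c
    refine ⟨e.symm v, ?_, ?_⟩
    · rw [hform (e.symm v), Equiv.apply_symm_apply]
      exact hv
    · show (e.symm v).1 ≠ 2
      have hss : (e.symm v).1 = -v.1 := rfl
      rw [hss]
      intro h
      apply hv1
      rw [← neg_neg v.1, h]
      decide

theorem stmt_4 (q : ℕ) (hq : q.Prime) (h3 : 3 < q) :
    achromaticNumber (unitaryCayley (ZMod (3 * q))) ≤ (3 * q + 1) / 2 := by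
  haveI := Fact.mk hq
  haveI : NeZero q := ⟨hq.pos.ne'⟩
  haveI : NeZero (3 * q) := ⟨by have := hq.pos; omega⟩
  apply csSup_le'
  rintro n ⟨C, hC⟩
  have hco : Nat.Coprime 3 q := (Nat.coprime_primes (by norm_num) hq).mpr (by omega)
  let φ : ZMod (3 * q) ≃+* ZMod 3 × ZMod q := ZMod.chineseRemainder hco
  have hmap : ∀ x y : ZMod (3 * q), (unitaryCayley (ZMod (3 * q))).Adj x y ↔
      (unitaryCayley (ZMod 3 × ZMod q)).Adj (φ x) (φ y) := by
    intro x y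
    constructor
    · rintro ⟨hne, hu⟩
      refine ⟨fun h => hne (φ.injective h), ?_⟩
      rw [← map_add]
      exact hu.map φ
    · rintro ⟨hne, hu⟩
      refine ⟨fun h => hne (by rw [h]), ?_⟩
      rw [← map_add] at hu
      have h2 := hu.map φ.symm
      simpa using h2
  obtain ⟨C', hC', _⟩ := transfer (φ.symm.toEquiv)
      (fun v w => by
        have hh := (hmap (φ.symm v) (φ.symm w)).symm
        simpa using hh) C hC
  have hb := aux_bound2 hq h3 C' hC'
  omega
end

section
/- For any odd prime p, the achromatic number of the unitary addition Cayley graph U(ℤ_{2p}) equals p. -/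
private lemma aux_isUnit_prod {M N : Type*} [Monoid M] [Monoid N] {a : M} {b : N}
    (ha : IsUnit a) (hb : IsUnit b) : IsUnit (a, b) := by
  obtain ⟨u, rfl⟩ := ha
  obtain ⟨v, rfl⟩ := hb
  exact ⟨MulEquiv.prodUnits.symm (u, v), rfl⟩

theorem stmt_5 (p : ℕ) (hp : p.Prime) (hodd : Odd p) :
    achromaticNumber (unitaryCayley (ZMod (2 * p))) = p := by
  have hfact : Fact p.Prime := ⟨hp⟩
  have hpos : 0 < p := hp.pos
  have hnz : NeZero p := ⟨hpos.ne'⟩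
  have hnz2 : NeZero (2 * p) := ⟨by positivity⟩
  have hcop : Nat.Coprime 2 p := hodd.coprime_two_left
  set G := unitaryCayley (ZMod (2 * p)) with hG
  let χ : ZMod (2 * p) ≃+* ZMod 2 × ZMod p := ZMod.chineseRemainder hcop
  have hone : ∀ a : ZMod 2, IsUnit a ↔ a = 1 := by decide
  have h01 : ∀ a : ZMod 2, a = 0 ∨ a = 1 := by decide
  have hchar : ∀ z : ZMod (2 * p), IsUnit z ↔ (χ z).1 = 1 ∧ (χ z).2 ≠ 0 := by
    intro z
    constructor
    · intro h
      have h2 : IsUnit (χ z) := h.map χ.toRingHom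
      exact ⟨(hone _).1 (h2.map (MonoidHom.fst _ _)),
        isUnit_iff_ne_zero.mp (h2.map (MonoidHom.snd _ _))⟩
    · rintro ⟨h1, h2⟩
      have hu : IsUnit ((χ z).1, (χ z).2) :=
        aux_isUnit_prod ((hone _).2 h1) (isUnit_iff_ne_zero.mpr h2)
      have hu' : IsUnit (χ z) := by simpa using hu
      have := hu'.map χ.symm.toRingHom
      simpa using this
  have hadj : ∀ x y : ZMod (2 * p), G.Adj x y ↔
      χ x ≠ χ y ∧ (χ x).1 + (χ y).1 = 1 ∧ (χ x).2 + (χ y).2 ≠ 0 := by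
    intro x y
    show (x ≠ y ∧ IsUnit (x + y)) ↔ _
    rw [hchar]
    constructor
    · rintro ⟨hne, h1, h2⟩
      refine ⟨fun h => hne (χ.injective h), ?_, ?_⟩
      · simpa [map_add] using h1
      · simpa [map_add] using h2
    · rintro ⟨hne, h1, h2⟩
      exact ⟨fun h => hne (by rw [h]), by simpa [map_add] using h1,
        by simpa [map_add] using h2⟩
  set S := {n | ∃ C : G.Coloring (Fin n), IsCompleteColoring G C} with hS
  -- membership : p ∈ S
  let e : ZMod p ≃ Fin p := Fintype.equivFinOfCardEq (ZMod.card p)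
  let g : ZMod (2 * p) → ZMod p := fun x => if (χ x).1 = 0 then (χ x).2 else -(χ x).2
  have hvalid : ∀ {x y : ZMod (2 * p)}, G.Adj x y → e (g x) ≠ e (g y) := by
    intro x y hxy
    rw [hadj] at hxy
    obtain ⟨hne, h1, h2⟩ := hxy
    intro heq
    have hg : g x = g y := e.injective heq
    rcases h01 ((χ x).1) with ha | ha <;> rcases h01 ((χ y).1) with hb | hb <;>
        rw [ha, hb] at h1
    · exact absurd h1 (by decide)
    · have e1 : g x = (χ x).2 := if_pos ha
      have e2 : g y = -(χ y).2 := if_neg (by simp [hb])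
      rw [e1, e2] at hg
      exact h2 (by rw [hg]; ring)
    · have e1 : g x = -(χ x).2 := if_neg (by simp [ha])
      have e2 : g y = (χ y).2 := if_pos hb
      rw [e1, e2] at hg
      exact h2 (by rw [← hg]; ring)
    · exact absurd h1 (by decide)
  let C : G.Coloring (Fin p) := SimpleGraph.Coloring.mk (fun x => e (g x)) hvalid
  have hgx : ∀ c : ZMod p, g (χ.symm (0, c)) = c := by
    intro c
    simp [g, RingEquiv.apply_symm_apply]
  have hgy : ∀ c : ZMod p, g (χ.symm (1, -c)) = c := by
    intro c
    simp only [g, RingEquiv.apply_symm_apply]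
    rw [if_neg (by decide : (1 : ZMod 2) ≠ 0), neg_neg]
  have hmem : p ∈ S := by
    refine ⟨C, ?_, ?_⟩
    · intro d
      refine ⟨χ.symm (0, e.symm d), ?_⟩
      show e (g (χ.symm (0, e.symm d))) = d
      rw [hgx]; simp
    · intro d₁ d₂ hd
      refine ⟨χ.symm (0, e.symm d₁), χ.symm (1, -(e.symm d₂)), ?_, ?_, ?_⟩
      · rw [hadj]
        refine ⟨?_, ?_, ?_⟩
        · simp only [RingEquiv.apply_symm_apply]
          intro h
          have h' : (0 : ZMod 2) = 1 := congrArg Prod.fst h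
          exact absurd h' (by decide)
        · simp only [RingEquiv.apply_symm_apply]
          decide
        · simp only [RingEquiv.apply_symm_apply]
          intro h
          apply hd
          have : e.symm d₁ = e.symm d₂ := by linear_combination h
          simpa using congrArg e this
      · show e (g (χ.symm (0, e.symm d₁))) = d₁
        rw [hgx]; simp
      · show e (g (χ.symm (1, -(e.symm d₂)))) = d₂
        rw [hgy]; simp
  -- upper bound
  have hub : ∀ n ∈ S, n ≤ p := by
    rintro n ⟨C, hsurj, hcomp⟩
    by_cases hsing : ∃ (c0 : Fin n) (v : ZMod (2 * p)), ∀ x, C x = c0 → x = v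
    · obtain ⟨c0, v, hv⟩ := hsing
      obtain ⟨w, hw⟩ := hsurj c0
      have hCv : C v = c0 := (hv w hw) ▸ hw
      have hY : ∀ c : Fin n, ∃ y, c ≠ c0 → G.Adj v y ∧ C y = c := by
        intro c
        by_cases hc : c = c0
        · exact ⟨v, fun h => absurd hc h⟩
        · obtain ⟨x, y, hxy, hx, hy⟩ := hcomp c0 c (Ne.symm hc)
          have hxv : x = v := hv x hx
          exact ⟨y, fun _ => ⟨hxv ▸ hxy, hy⟩⟩
      choose Y hY using hY
      have hcard : (Finset.univ.erase c0).card ≤ (Finset.univ.erase (0 : ZMod p)).card := by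
        apply Finset.card_le_card_of_injOn (fun c => (χ (v + Y c)).2)
        · intro c hc
          have hc' : c ≠ c0 := Finset.ne_of_mem_erase hc
          obtain ⟨hadj', _⟩ := hY c hc'
          rw [hadj] at hadj'
          have hu : IsUnit (v + Y c) := by
            rw [hchar, map_add]
            exact ⟨by simpa using hadj'.2.1, by simpa using hadj'.2.2⟩
          rw [hchar] at hu
          exact Finset.mem_erase.mpr ⟨hu.2, Finset.mem_univ _⟩
        · intro c hc c' hc' heq
          have hc1 : c ≠ c0 := Finset.ne_of_mem_erase hc
          have hc1' : c' ≠ c0 := Finset.ne_of_mem_erase hc'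
          obtain ⟨ha1, hC1⟩ := hY c hc1
          obtain ⟨ha2, hC2⟩ := hY c' hc1'
          have hu1 : IsUnit (v + Y c) := by
            rw [hadj] at ha1
            rw [hchar, map_add]
            exact ⟨by simpa using ha1.2.1, by simpa using ha1.2.2⟩
          have hu2 : IsUnit (v + Y c') := by
            rw [hadj] at ha2
            rw [hchar, map_add]
            exact ⟨by simpa using ha2.2.1, by simpa using ha2.2.2⟩
          rw [hchar] at hu1 hu2
          have hfst : (χ (v + Y c)).1 = (χ (v + Y c')).1 := by rw [hu1.1, hu2.1]
          have : χ (v + Y c) = χ (v + Y c') := Prod.ext hfst heq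
          have hyy : Y c = Y c' := by
            have := χ.injective this
            exact add_left_cancel this
          rw [← hC1, ← hC2, hyy]
      have h1 : (Finset.univ.erase c0).card = n - 1 := by
        rw [Finset.card_erase_of_mem (Finset.mem_univ _), Finset.card_univ,
          Fintype.card_fin]
      have h2 : (Finset.univ.erase (0 : ZMod p)).card = p - 1 := by
        rw [Finset.card_erase_of_mem (Finset.mem_univ _), Finset.card_univ, ZMod.card]
      rw [h1, h2] at hcard
      omega
    · push_neg at hsing
      have hfib : ∀ c : Fin n, 2 ≤ (Finset.univ.filter (fun x => C x = c)).card := by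
        intro c
        obtain ⟨x, hx⟩ := hsurj c
        obtain ⟨x', hx', hne⟩ := hsing c x
        rw [Nat.succ_le_iff]
        rw [Finset.one_lt_card]
        exact ⟨x', by simp [hx'], x, by simp [hx], hne⟩
      have hsum : (Finset.univ : Finset (ZMod (2 * p))).card =
          ∑ c : Fin n, (Finset.univ.filter (fun x => C x = c)).card :=
        Finset.card_eq_sum_card_fiberwise (fun x _ => Finset.mem_univ _)
      have hle : n * 2 ≤ ∑ c : Fin n, (Finset.univ.filter (fun x => C x = c)).card := by
        calc n * 2 = ∑ _c : Fin n, 2 := by simp [mul_comm]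
        _ ≤ _ := Finset.sum_le_sum (fun c _ => hfib c)
      have hcardu : (Finset.univ : Finset (ZMod (2 * p))).card = 2 * p := by
        rw [Finset.card_univ, ZMod.card]
      omega
  -- conclude
  refine le_antisymm (csSup_le ⟨p, hmem⟩ hub) (le_csSup ⟨p, hub⟩ hmem)
end

section
/- Let R = R₁ × R₂ × ⋯ × Rₘ be a finite commutative ring with unity having an odd number of elements, where each Rᵢ is a finite commutative local ring with unique maximal ideal Mᵢ. Then the clique number of the unitary addition Cayley graph U(R) is at least m + ∏_{i=1}^{m} (|Rᵢ| − |Mᵢ|)/2. -/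
/-- Pairing by a fixed-point-free involution: one can select exactly half of the set,
one element from each pair `{x, σ x}`. -/
lemma pairing_select {α : Type*} [DecidableEq α] (σ : α → α) (hσ : ∀ x, σ (σ x) = x) :
    ∀ s : Finset α, (∀ x ∈ s, σ x ∈ s) → (∀ x ∈ s, σ x ≠ x) →
      ∃ t, t ⊆ s ∧ 2 * t.card = s.card ∧ ∀ x ∈ s, (x ∈ t ↔ σ x ∉ t) := by
  intro s
  induction s using Finset.strongInduction with
  | _ s ih =>
    intro hclosed hfix
    rcases s.eq_empty_or_nonempty with rfl | ⟨a, ha⟩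
    · exact ⟨∅, by simp⟩
    · have hane : σ a ≠ a := hfix a ha
      have hsa : σ a ∈ s := hclosed a ha
      set s' : Finset α := s \ {a, σ a} with hs'
      have hsub : s' ⊆ s := Finset.sdiff_subset
      have hssub : s' ⊂ s :=
        (Finset.ssubset_iff_of_subset hsub).mpr ⟨a, ha, by simp [hs']⟩
      have h1' : ∀ x ∈ s', σ x ∈ s' := by
        intro x hx
        rw [hs', Finset.mem_sdiff] at hx ⊢
        refine ⟨hclosed x hx.1, ?_⟩
        simp only [Finset.mem_insert, Finset.mem_singleton] at hx ⊢
        push_neg at hx ⊢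
        constructor
        · intro h; exact hx.2.2 (by rw [← hσ x, h])
        · intro h; exact hx.2.1 (by rw [← hσ x, h, hσ])
      have h2' : ∀ x ∈ s', σ x ≠ x := fun x hx => hfix x (hsub hx)
      obtain ⟨t, hts, hcard, hiff⟩ := ih s' hssub h1' h2'
      have hanot : a ∉ s' := by simp [hs']
      have hsanot : σ a ∉ s' := by simp [hs']
      have hat : a ∉ t := fun h => hanot (hts h)
      have hsat : σ a ∉ t := fun h => hsanot (hts h)
      refine ⟨insert a t, ?_, ?_, ?_⟩
      · intro x hx
        rcases Finset.mem_insert.mp hx with rfl | hx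
        · exact ha
        · exact hsub (hts hx)
      · rw [Finset.card_insert_of_notMem hat]
        have hps : ({a, σ a} : Finset α) ⊆ s := by
          intro x hx
          rcases Finset.mem_insert.mp hx with rfl | hx
          · exact ha
          · rw [Finset.mem_singleton] at hx; subst hx; exact hsa
        have hcp : ({a, σ a} : Finset α).card = 2 := by
          rw [Finset.card_insert_of_notMem (by simp [Ne.symm hane]), Finset.card_singleton]
        have hds := Finset.card_sdiff_of_subset hps
        have h2le : 2 ≤ s.card := hcp ▸ Finset.card_le_card hps
        rw [hcp] at hds
        rw [← hs'] at hds
        omega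
      · intro x hx
        by_cases hxa : x = a
        · subst hxa
          simp only [Finset.mem_insert, true_or, true_iff]
          push_neg
          exact ⟨hane, hsat⟩
        · by_cases hxsa : x = σ a
          · subst hxsa
            rw [hσ]
            simp [hat, hsat, hane, Ne.symm hane]
          · have hx' : x ∈ s' := by
              rw [hs', Finset.mem_sdiff]
              exact ⟨hx, by simp [hxa, hxsa]⟩
            have hsxa : σ x ≠ a := by
              intro h
              exact hxsa (by rw [← hσ x, h])
            simp only [Finset.mem_insert, hxa, hsxa, false_or]
            exact hiff x hx'

/-- In a finite local ring of odd cardinality there is a set `S` of size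
`(|R| - |M|)/2` whose pairwise (and self) sums are all units. -/
lemma local_half (R : Type*) [CommRing R] [IsLocalRing R] [Fintype R]
    (hodd : Odd (Fintype.card R)) :
    ∃ S : Finset R,
      2 * S.card = Fintype.card R - Nat.card (IsLocalRing.maximalIdeal R) ∧
      S.Nonempty ∧ ∀ x ∈ S, ∀ y ∈ S, IsUnit (x + y) := by
  classical
  set M := IsLocalRing.maximalIdeal R with hM
  set k := R ⧸ M with hk
  letI : Fintype k := Fintype.ofFinite k
  letI : Field k := Ideal.Quotient.field M
  set π : R →+* k := Ideal.Quotient.mk M with hπ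
  have hsurj : Function.Surjective π := Ideal.Quotient.mk_surjective
  have hker : ∀ x : R, π x = 0 ↔ x ∈ M := fun x => Ideal.Quotient.eq_zero_iff_mem
  -- fiber counting
  have count : ∀ T : Finset k,
      (Finset.univ.filter fun x => π x ∈ T).card = T.card * Nat.card M := by
    intro T
    rw [Finset.card_eq_sum_card_fiberwise
      (s := Finset.univ.filter fun x => π x ∈ T) (f := π) (t := T) (fun x hx => (Finset.mem_filter.mp hx).2)]
    rw [Finset.sum_congr rfl (fun b hb => ?_), Finset.sum_const, smul_eq_mul]
    have hfil : ((Finset.univ.filter fun x => π x ∈ T).filter fun x => π x = b)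
        = Finset.univ.filter fun x => π x = b := by
      ext x
      constructor
      · intro h
        exact Finset.mem_filter.mpr ⟨Finset.mem_univ _, (Finset.mem_filter.mp h).2⟩
      · intro h
        have hb' : π x = b := (Finset.mem_filter.mp h).2
        exact Finset.mem_filter.mpr
          ⟨Finset.mem_filter.mpr ⟨Finset.mem_univ _, by rw [hb']; exact hb⟩, hb'⟩
    rw [hfil]
    obtain ⟨g, hg⟩ := hsurj b
    have e : {x : R // π x = b} ≃ M :=
      { toFun := fun x => ⟨x.1 - g, by
          rw [← hker]
          simp [map_sub, x.2, hg]⟩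
        invFun := fun m => ⟨g + m.1, by
          have : π m.1 = 0 := (hker m.1).mpr m.2
          simp [map_add, this, hg]⟩
        left_inv := fun x => by ext; simp
        right_inv := fun m => by ext; simp }
    rw [Nat.card_eq_fintype_card, ← Fintype.card_congr e, Fintype.card_subtype]
  have hall : Fintype.card R = Fintype.card k * Nat.card M := by
    have h := count Finset.univ
    simpa using h
  have hoddk : Odd (Fintype.card k) := by
    rw [hall] at hodd
    exact (Nat.odd_mul.mp hodd).1
  have two_ne : (2 : k) ≠ 0 := by
    obtain ⟨n, hn⟩ := hoddk
    have h0 : ((Fintype.card k : ℕ) : k) = 0 := FiniteField.cast_card_eq_zero k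
    rw [hn] at h0
    push_cast at h0
    have h1 : (2 : k) * ((n : k) + 1) = 1 := by linear_combination h0
    intro h2
    rw [h2, zero_mul] at h1
    exact zero_ne_one h1
  -- pairing on nonzero elements of k
  set s₀ : Finset k := Finset.univ.filter (fun x => x ≠ 0) with hs₀
  obtain ⟨t, hts, htcard, htiff⟩ :=
    pairing_select (fun x : k => -x) (fun x => neg_neg x) s₀
      (by intro x hx; simp only [hs₀, Finset.mem_filter, Finset.mem_univ, true_and] at hx ⊢
          simpa using hx)
      (by intro x hx h
          simp only [hs₀, Finset.mem_filter, Finset.mem_univ, true_and] at hx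
          have : (2 : k) * x = 0 := by linear_combination -h
          rcases mul_eq_zero.mp this with h' | h'
          · exact two_ne h'
          · exact hx h')
  have hs₀card : s₀.card = Fintype.card k - 1 := by
    rw [hs₀, Finset.filter_ne', Finset.card_erase_of_mem (Finset.mem_univ _),
      Finset.card_univ]
  set S : Finset R := Finset.univ.filter (fun x => π x ∈ t) with hS
  have hScard : S.card = t.card * Nat.card M := count t
  have hMlt : Nat.card M < Fintype.card R := by
    rw [Nat.card_eq_fintype_card]
    exact Fintype.card_subtype_lt (x := (1 : R))
      (by rw [hM, IsLocalRing.mem_maximalIdeal]; exact fun h => h isUnit_one)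
  have h2S : 2 * S.card = Fintype.card R - Nat.card M := by
    rw [hScard, ← mul_assoc, htcard, hs₀card, Nat.sub_mul, one_mul, ← hall]
  refine ⟨S, h2S, ?_, ?_⟩
  · rw [← Finset.card_pos]
    omega
  · intro x hx y hy
    rw [hS, Finset.mem_filter] at hx hy
    by_contra hnu
    have hmem : x + y ∈ M := by
      rw [hM, IsLocalRing.mem_maximalIdeal]; exact hnu
    have h0 : π x + π y = 0 := by
      rw [← map_add]; exact (hker _).mpr hmem
    have hyx : π y = -π x := by linear_combination h0
    have hxs₀ : π x ∈ s₀ := hts hx.2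
    have := (htiff (π x) hxs₀).mp hx.2
    rw [← hyx] at this
    exact this hy.2

lemma pi_isUnit {ι : Type*} {R : ι → Type*} [∀ i, CommRing (R i)] {f : ∀ i, R i}
    (h : ∀ i, IsUnit (f i)) : IsUnit f := by
  choose g hg using fun i => isUnit_iff_exists_inv.mp (h i)
  exact isUnit_iff_exists_inv.mpr ⟨g, funext hg⟩

theorem stmt_7 (m : ℕ) (R : Fin m → Type*) [∀ i, CommRing (R i)]
    [∀ i, IsLocalRing (R i)] [∀ i, Fintype (R i)]
    (hodd : Odd (Fintype.card (∀ i, R i))) :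
    m + ∏ i, (Fintype.card (R i) - Nat.card (IsLocalRing.maximalIdeal (R i))) / 2 ≤
      (unitaryCayley (∀ i, R i)).cliqueNum := by
  classical
  have hoddi : ∀ i, Odd (Fintype.card (R i)) := by
    intro i
    rw [Fintype.card_pi] at hodd
    rw [Nat.odd_iff, ← Nat.not_even_iff] at hodd ⊢
    intro h
    exact hodd (Dvd.dvd.trans (even_iff_two_dvd.mp h)
      (Finset.dvd_prod_of_mem _ (Finset.mem_univ i)) |> even_iff_two_dvd.mpr)
  choose S hScard hSne hSunit using fun i => local_half (R i) (hoddi i)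
  set c : ∀ i, R i := fun i => (hSne i).choose with hc
  have hcS : ∀ i, c i ∈ S i := fun i => (hSne i).choose_spec
  have hu : ∀ i, ∀ x ∈ S i, IsUnit x := by
    intro i x hx
    have h2 : IsUnit (x * 2) := by
      rw [mul_two]; exact hSunit i x hx x hx
    exact isUnit_of_mul_isUnit_left h2
  have hnontriv : ∀ i, (0 : R i) ≠ 1 := fun i => zero_ne_one
  set box : Finset (∀ i, R i) := Fintype.piFinset S with hbox
  set xv : Fin m → (∀ i, R i) := fun j => fun i => if i = j then 0 else c i with hxv
  set X : Finset (∀ i, R i) := Finset.univ.image xv with hX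
  -- xv j has a zero (non-unit) coordinate, box elements have all-unit coordinates
  have hboxU : ∀ f ∈ box, ∀ i, IsUnit (f i) := by
    intro f hf i
    exact hu i _ (Fintype.mem_piFinset.mp hf i)
  have hxvap : ∀ j i, xv j i = if i = j then 0 else c i := fun _ _ => rfl
  have hdisj : Disjoint box X := by
    rw [Finset.disjoint_left]
    intro f hf hfX
    obtain ⟨j, _, rfl⟩ := Finset.mem_image.mp hfX
    have h1 := hboxU _ hf j
    rw [hxvap, if_pos rfl] at h1
    exact not_isUnit_zero h1
  have hxvinj : Function.Injective xv := by
    intro j j' h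
    by_contra hne
    have h1 := congrFun h j
    rw [hxvap, hxvap, if_pos rfl, if_neg hne] at h1
    exact not_isUnit_zero (h1 ▸ hu j (c j) (hcS j))
  have hXcard : X.card = m := by
    rw [hX, Finset.card_image_of_injective _ hxvinj, Finset.card_univ, Fintype.card_fin]
  have hboxcard : box.card = ∏ i, (S i).card := Fintype.card_piFinset S
  -- the clique
  set K : Finset (∀ i, R i) := box ∪ X with hK
  have hclique : (unitaryCayley (∀ i, R i)).IsClique ↑K := by
    intro x hx y hy hne
    show x ≠ y ∧ IsUnit (x + y)
    refine ⟨hne, pi_isUnit fun i => ?_⟩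
    rw [Pi.add_apply]
    simp only [hK, Finset.coe_union, Set.mem_union, Finset.mem_coe] at hx hy
    rcases hx with hx | hx
    · rcases hy with hy | hy
      · exact hSunit i _ (Fintype.mem_piFinset.mp hx i) _ (Fintype.mem_piFinset.mp hy i)
      · obtain ⟨j, _, rfl⟩ := Finset.mem_image.mp hy
        rw [hxvap]
        by_cases hij : i = j
        · rw [if_pos hij, add_zero]
          exact hu i _ (Fintype.mem_piFinset.mp hx i)
        · rw [if_neg hij]
          exact hSunit i _ (Fintype.mem_piFinset.mp hx i) _ (hcS i)
    · obtain ⟨j, _, rfl⟩ := Finset.mem_image.mp hx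
      rw [hxvap]
      rcases hy with hy | hy
      · by_cases hij : i = j
        · rw [if_pos hij, zero_add]
          exact hu i _ (Fintype.mem_piFinset.mp hy i)
        · rw [if_neg hij]
          exact hSunit i _ (hcS i) _ (Fintype.mem_piFinset.mp hy i)
      · obtain ⟨j', _, rfl⟩ := Finset.mem_image.mp hy
        rw [hxvap]
        have hjj' : j ≠ j' := fun h => hne (by rw [h])
        by_cases hij : i = j
        · rw [if_pos hij, if_neg (hij ▸ hjj'), zero_add]
          exact hu i _ (hcS i)
        · rw [if_neg hij]
          by_cases hij' : i = j'
          · rw [if_pos hij', add_zero]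
            exact hu i _ (hcS i)
          · rw [if_neg hij']
            exact hSunit i _ (hcS i) _ (hcS i)
  have hKcard : K.card = (∏ i, (S i).card) + m := by
    rw [hK, Finset.card_union_of_disjoint hdisj, hboxcard, hXcard]
  have hle : m + ∏ i, (Fintype.card (R i) - Nat.card (IsLocalRing.maximalIdeal (R i))) / 2
      ≤ K.card := by
    rw [hKcard, add_comm]
    have : ∀ i, (Fintype.card (R i) - Nat.card (IsLocalRing.maximalIdeal (R i))) / 2
        = (S i).card := by
      intro i
      have := hScard i
      omega
    rw [Finset.prod_congr rfl (fun i _ => this i)]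
  calc m + ∏ i, (Fintype.card (R i) - Nat.card (IsLocalRing.maximalIdeal (R i))) / 2
      ≤ K.card := hle
    _ ≤ (unitaryCayley (∀ i, R i)).cliqueNum := hclique.card_le_cliqueNum
end

section
/- For every odd integer n > 1, the number of edges of the unitary addition Cayley graph U(ℤₙ) equals (n − 1)·φ(n)/2, where φ is Euler's totient function. In particular, for a prime q > 3, the number of edges of U(ℤ_{3q}) equals (3q − 1)(q − 1). -/
open Finset

lemma unitaryCayley_card_edges (n : ℕ) (hodd : Odd n) (h1 : 1 < n) :
    Nat.card (unitaryCayley (ZMod n)).edgeSet = (n - 1) * n.totient / 2 := by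
  classical
  haveI : NeZero n := ⟨by omega⟩
  set G := unitaryCayley (ZMod n) with hG
  have h2 : IsUnit (2 : ZMod n) := by
    have hc : Nat.Coprime 2 n := Nat.coprime_two_left.mpr hodd
    have := (ZMod.isUnit_iff_coprime 2 n).mpr hc
    simpa using this
  have hcard_units : #(univ.filter (fun z : ZMod n => IsUnit z)) = n.totient := by
    rw [← ZMod.card_units_eq_totient n, ← Fintype.card_subtype]
    exact Fintype.card_congr
      ⟨fun z => z.2.unit, fun u => ⟨(u : ZMod n), u.isUnit⟩,
        fun z => by ext; simp, fun u => by ext; simp⟩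
  have hxx_unit : ∀ x : ZMod n, IsUnit (x + x) ↔ IsUnit x := by
    intro x
    rw [← two_mul, IsUnit.mul_iff]
    exact ⟨fun h => h.2, fun h => ⟨h2, h⟩⟩
  have hdeg : ∀ x : ZMod n, G.degree x + (if IsUnit x then 1 else 0) = n.totient := by
    intro x
    have hdeg1 : G.degree x
        = #(univ.filter (fun z : ZMod n => IsUnit z ∧ z ≠ x + x)) := by
      rw [SimpleGraph.degree]
      apply Finset.card_bij' (fun y _ => x + y) (fun z _ => z - x)
      · intro y hy
        rw [SimpleGraph.mem_neighborFinset] at hy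
        obtain ⟨hne, hu⟩ : x ≠ y ∧ IsUnit (x + y) := hy
        simp only [mem_filter, mem_univ, true_and]
        exact ⟨hu, fun h => hne (add_left_cancel h).symm⟩
      · intro z hz
        simp only [mem_filter, mem_univ, true_and] at hz
        rw [SimpleGraph.mem_neighborFinset]
        change x ≠ z - x ∧ IsUnit (x + (z - x))
        constructor
        · intro h
          exact hz.2 (by linear_combination -h)
        · convert hz.1 using 1; ring
      · intro y _; ring
      · intro z _; ring
    have hsplit := Finset.card_filter_add_card_filter_not
      (s := univ.filter (fun z : ZMod n => IsUnit z)) (p := fun z => z ≠ x + x)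

    rw [Finset.filter_filter, Finset.filter_filter] at hsplit
    have h2nd : #(univ.filter (fun z : ZMod n => IsUnit z ∧ ¬z ≠ x + x))
        = if IsUnit x then 1 else 0 := by
      split_ifs with hu
      · rw [Finset.card_eq_one]
        refine ⟨x + x, ?_⟩
        ext z
        simp only [mem_filter, mem_univ, true_and, not_not, mem_singleton]
        constructor
        · exact fun h => h.2
        · rintro rfl; exact ⟨(hxx_unit x).mpr hu, rfl⟩
      · rw [Finset.card_eq_zero, Finset.filter_eq_empty_iff]
        rintro z _ ⟨hz, hz2⟩
        rw [not_not] at hz2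
        subst hz2
        exact hu ((hxx_unit x).mp hz)
    rw [hcard_units] at hsplit
    rw [hdeg1, ← h2nd]
    exact hsplit
  have hsum : ∑ x : ZMod n, (G.degree x + if IsUnit x then 1 else 0)
      = Fintype.card (ZMod n) * n.totient := by
    rw [Finset.sum_congr rfl fun x _ => hdeg x, Finset.sum_const, smul_eq_mul,
      Finset.card_univ]
  rw [Finset.sum_add_distrib] at hsum
  have hbool : ∑ x : ZMod n, (if IsUnit x then 1 else 0)
      = #(univ.filter (fun z : ZMod n => IsUnit z)) := by
    rw [Finset.card_filter]
  have hE : ∑ x : ZMod n, G.degree x = 2 * #G.edgeFinset :=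
    G.sum_degrees_eq_twice_card_edges
  rw [hE, hbool, hcard_units, ZMod.card n] at hsum
  rw [Nat.card_eq_fintype_card, ← SimpleGraph.edgeFinset_card]
  have hmul : (n - 1) * n.totient + n.totient = n * n.totient := by
    rw [← Nat.succ_mul, Nat.succ_eq_add_one, Nat.sub_add_cancel (by omega)]
  omega

theorem stmt_14 :
    (∀ n : ℕ, Odd n → 1 < n →
      Nat.card (unitaryCayley (ZMod n)).edgeSet = (n - 1) * n.totient / 2) ∧
    (∀ q : ℕ, q.Prime → 3 < q →
      Nat.card (unitaryCayley (ZMod (3 * q))).edgeSet = (3 * q - 1) * (q - 1)) := by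
  constructor
  · exact unitaryCayley_card_edges
  · intro q hq h3
    have hq3 : Nat.Coprime 3 q := by
      rw [Nat.coprime_primes (by norm_num) hq]; omega
    have hodd : Odd (3 * q) := by
      have : Odd q := hq.odd_of_ne_two (by omega)
      exact (by decide : Odd 3).mul this
    have h1 : 1 < 3 * q := by omega
    rw [unitaryCayley_card_edges (3 * q) hodd h1, Nat.totient_mul hq3,
      Nat.totient_prime hq]
    have h3' : Nat.totient 3 = 2 := by decide
    rw [h3']
    have : (3 * q - 1) * (2 * (q - 1)) = 2 * ((3 * q - 1) * (q - 1)) := by ring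
    rw [this, Nat.mul_div_cancel_left _ (by norm_num)]
end
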